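/- arXiv:0910.1507 — 5 statements merged into one kernel-verified Lean document; each statement's English description precedes it below -/
import Mathlib

section
/- Let σ be any natural L_ξ-spline on τ and let ψ ∈ C^p(ℝ) be such that ψ^(m) ∈ L²(ℝ) for all m ∈ {0, ..., p}. Then ∫_{−∞}^{∞} (d/dt − |ξ|)^p σ(t) · conj((d/dt − |ξ|)^p ψ(t)) dt = Σ_{m=0}^{p} binom(p, m) |ξ|^{2(p−m)} ∫_{−∞}^{∞} σ^(m)(t) · conj(ψ^(m)(t)) dt, where binom(p, m) = p!/(m!(p−m)!). -/
open MeasureTheory Finset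

noncomputable section

/-- The first-order operator `d/dt - c` acting on functions `ℝ → ℂ`. -/
def DOp (c : ℝ) (f : ℝ → ℂ) : ℝ → ℂ := fun t => deriv f t - (c : ℂ) * f t

/-- The iterated operator `(d/dt - c)^k`. -/
def DIter (c : ℝ) (k : ℕ) (f : ℝ → ℂ) : ℝ → ℂ := (DOp c)^[k] f

/-- The second-order operator `d²/dt² - c²` acting on functions `ℝ → ℂ`. -/
def LOp (c : ℝ) (f : ℝ → ℂ) : ℝ → ℂ := fun t => iteratedDeriv 2 f t - ((c : ℂ)) ^ 2 * f t

/-- The operator `L_ξ = (d²/dt² - c²)^p` with `c = |ξ|`. -/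
def LIter (c : ℝ) (p : ℕ) (f : ℝ → ℂ) : ℝ → ℂ := (LOp c)^[p] f

/-- `s : ℝ → ℂ` is a natural `L_ξ`-spline on the knots `τ 0 < τ 1 < ... < τ N`
(with `c = |ξ|`): (i) `s ∈ C^{2p-2}(ℝ)`; (ii) `L_ξ s = 0` on every open interval
between consecutive knots, as well as on `(-∞, τ 0)` and `(τ N, ∞)`;
(iii) `(d/dt - |ξ|)^p s = 0` on `(-∞, τ 0)` and `(d/dt + |ξ|)^p s = 0` on `(τ N, ∞)`. -/
def IsNaturalLSpline (p N : ℕ) (c : ℝ) (τ : Fin (N + 1) → ℝ) (s : ℝ → ℂ) : Prop :=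
  ContDiff ℝ (2 * p - 2 : ℕ) s ∧
  (∀ j : Fin N, ∀ x ∈ Set.Ioo (τ j.castSucc) (τ j.succ), LIter c p s x = 0) ∧
  (∀ x ∈ Set.Iio (τ 0), LIter c p s x = 0) ∧
  (∀ x ∈ Set.Ioi (τ (Fin.last N)), LIter c p s x = 0) ∧
  (∀ x ∈ Set.Iio (τ 0), DIter c p s x = 0) ∧
  (∀ x ∈ Set.Ioi (τ (Fin.last N)), DIter (-c) p s x = 0)

namespace AuxSpline

lemma pascal_step (x : ℂ) (h : ℕ → ℂ) (q : ℕ) :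
    ∑ a ∈ Finset.range (q+2), ((q+1).choose a : ℂ) * x ^ (q+1-a) * h a
      = ∑ a ∈ Finset.range (q+1), (q.choose a : ℂ) * x ^ (q-a) * h (a+1)
        + x * ∑ a ∈ Finset.range (q+1), (q.choose a : ℂ) * x ^ (q-a) * h a := by
  rw [Finset.sum_range_succ' (fun a => ((q+1).choose a : ℂ) * x ^ (q+1-a) * h a)]
  have e1 : ∀ a ∈ Finset.range (q+1),
      ((q+1).choose (a+1) : ℂ) * x ^ (q+1-(a+1)) * h (a+1)
        = (q.choose a : ℂ) * x ^ (q-a) * h (a+1)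
          + (q.choose (a+1) : ℂ) * x ^ (q-a) * h (a+1) := by
    intro a _
    rw [Nat.choose_succ_succ, Nat.succ_sub_succ]
    push_cast
    ring
  rw [Finset.sum_congr rfl e1, Finset.sum_add_distrib]
  have e2 : ∑ a ∈ Finset.range (q+1), (q.choose (a+1) : ℂ) * x ^ (q-a) * h (a+1)
        + ((q+1).choose 0 : ℂ) * x ^ (q+1-0) * h 0
      = x * ∑ a ∈ Finset.range (q+1), (q.choose a : ℂ) * x ^ (q-a) * h a := by
    rw [Finset.mul_sum,
      Finset.sum_range_succ' (fun a => x * ((q.choose a : ℂ) * x ^ (q-a) * h a)),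
      Finset.sum_range_succ (fun a => (q.choose (a+1) : ℂ) * x ^ (q-a) * h (a+1))]
    have hz : (q.choose (q+1) : ℂ) = 0 := by
      norm_cast
      exact Nat.choose_succ_self q
    rw [hz]
    have e3 : ∀ a ∈ Finset.range q,
        (q.choose (a+1) : ℂ) * x ^ (q-a) * h (a+1)
          = x * ((q.choose (a+1) : ℂ) * x ^ (q-(a+1)) * h (a+1)) := by
      intro a ha
      rw [Finset.mem_range] at ha
      have : q - a = (q - (a+1)) + 1 := by omega
      rw [this, pow_succ]
      ring
    rw [Finset.sum_congr rfl e3]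
    simp only [Nat.choose_zero_right, Nat.choose_self, Nat.sub_zero, Nat.sub_self]
    push_cast
    ring
  rw [add_assoc, e2]

lemma key_algebra (c : ℂ) (p : ℕ) (A : ℕ → ℕ → ℂ)
    (hA : ∀ i j, i + 1 ≤ p → j + 1 ≤ p → A (i+1) j = - A i (j+1)) :
    ∀ q u v, u + q ≤ p → v + q ≤ p →
      ∑ a ∈ Finset.range (q+1), ∑ b ∈ Finset.range (q+1),
        ((q.choose a : ℂ) * (-c)^(q-a)) * ((q.choose b : ℂ) * (-c)^(q-b)) * A (u+a) (v+b)
      = ∑ j ∈ Finset.range (q+1), (q.choose j : ℂ) * (c^2)^(q-j) * A (u+j) (v+j) := by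
  intro q
  induction q with
  | zero => intro u v _ _; simp
  | succ q ih =>
    intro u v hu hv
    set x : ℂ := -c with hx
    set P : ℕ → ℂ := fun a => ∑ b ∈ Finset.range (q+1),
      (q.choose b : ℂ) * x ^ (q-b) * A (u+a) (v+(b+1)) with hP
    set Q : ℕ → ℂ := fun a => ∑ b ∈ Finset.range (q+1),
      (q.choose b : ℂ) * x ^ (q-b) * A (u+a) (v+b) with hQ
    have hW : ∀ a, ∑ b ∈ Finset.range (q+2),
        ((q+1).choose b : ℂ) * x ^ (q+1-b) * A (u+a) (v+b) = P a + x * Q a := by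
      intro a
      exact pascal_step x (fun b => A (u+a) (v+b)) q
    have hreshape : ∑ a ∈ Finset.range (q+2), ∑ b ∈ Finset.range (q+2),
        (((q+1).choose a : ℂ) * x^(q+1-a)) * (((q+1).choose b : ℂ) * x^(q+1-b)) * A (u+a) (v+b)
        = ∑ a ∈ Finset.range (q+2), ((q+1).choose a : ℂ) * x^(q+1-a) * (P a + x * Q a) := by
      refine Finset.sum_congr rfl fun a _ => ?_
      rw [← hW a, Finset.mul_sum]
      exact Finset.sum_congr rfl fun b _ => by ring
    rw [hreshape, pascal_step x (fun a => P a + x * Q a) q]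
    -- expand
    have hsplit1 : ∑ a ∈ Finset.range (q+1), (q.choose a : ℂ) * x^(q-a) * (P (a+1) + x * Q (a+1))
        = (∑ a ∈ Finset.range (q+1), (q.choose a : ℂ) * x^(q-a) * P (a+1))
          + ∑ a ∈ Finset.range (q+1), x * ((q.choose a : ℂ) * x^(q-a) * Q (a+1)) := by
      rw [← Finset.sum_add_distrib]
      exact Finset.sum_congr rfl fun a _ => by ring
    have hsplit2 : x * ∑ a ∈ Finset.range (q+1), (q.choose a : ℂ) * x^(q-a) * (P a + x * Q a)
        = (∑ a ∈ Finset.range (q+1), x * ((q.choose a : ℂ) * x^(q-a) * P a))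
          + x^2 * ∑ a ∈ Finset.range (q+1), (q.choose a : ℂ) * x^(q-a) * Q a := by
      rw [Finset.mul_sum, Finset.mul_sum, ← Finset.sum_add_distrib]
      exact Finset.sum_congr rfl fun a _ => by ring
    rw [hsplit1, hsplit2]
    -- cancellation of cross terms
    have hcancel : (∑ a ∈ Finset.range (q+1), x * ((q.choose a : ℂ) * x^(q-a) * Q (a+1)))
        + (∑ a ∈ Finset.range (q+1), x * ((q.choose a : ℂ) * x^(q-a) * P a)) = 0 := by
      rw [← Finset.sum_add_distrib]
      refine Finset.sum_eq_zero fun a ha => ?_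
      rw [Finset.mem_range] at ha
      have hQP : Q (a+1) + P a = 0 := by
        rw [hP, hQ]
        simp only
        rw [← Finset.sum_add_distrib]
        refine Finset.sum_eq_zero fun b hb => ?_
        rw [Finset.mem_range] at hb
        have h1 : A (u+(a+1)) (v+b) = - A (u+a) (v+(b+1)) := by
          rw [show u+(a+1) = (u+a)+1 from (add_assoc u a 1).symm,
            show v+(b+1) = (v+b)+1 from (add_assoc v b 1).symm]
          exact hA (u+a) (v+b) (by omega) (by omega)
        rw [h1]
        ring
      calc x * ((q.choose a : ℂ) * x^(q-a) * Q (a+1)) + x * ((q.choose a : ℂ) * x^(q-a) * P a)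
          = x * ((q.choose a : ℂ) * x^(q-a)) * (Q (a+1) + P a) := by ring
        _ = 0 := by rw [hQP, mul_zero]
    -- reorder and use cancellation
    have hT1 : ∑ a ∈ Finset.range (q+1), (q.choose a : ℂ) * x^(q-a) * P (a+1)
        = ∑ j ∈ Finset.range (q+1), (q.choose j : ℂ) * (c^2)^(q-j) * A ((u+1)+j) ((v+1)+j) := by
      have : ∑ a ∈ Finset.range (q+1), (q.choose a : ℂ) * x^(q-a) * P (a+1)
          = ∑ a ∈ Finset.range (q+1), ∑ b ∈ Finset.range (q+1),
            ((q.choose a : ℂ) * x^(q-a)) * ((q.choose b : ℂ) * x^(q-b)) * A ((u+1)+a) ((v+1)+b) := by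
        refine Finset.sum_congr rfl fun a _ => ?_
        rw [hP]
        simp only
        rw [Finset.mul_sum]
        refine Finset.sum_congr rfl fun b _ => ?_
        have h1 : u + (a+1) = (u+1) + a := by omega
        have h2 : v + (b+1) = (v+1) + b := by omega
        rw [h1, h2]
        ring
      rw [this, hx]
      exact ih (u+1) (v+1) (by omega) (by omega)
    have hT4 : ∑ a ∈ Finset.range (q+1), (q.choose a : ℂ) * x^(q-a) * Q a
        = ∑ j ∈ Finset.range (q+1), (q.choose j : ℂ) * (c^2)^(q-j) * A (u+j) (v+j) := by
      have : ∑ a ∈ Finset.range (q+1), (q.choose a : ℂ) * x^(q-a) * Q a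
          = ∑ a ∈ Finset.range (q+1), ∑ b ∈ Finset.range (q+1),
            ((q.choose a : ℂ) * x^(q-a)) * ((q.choose b : ℂ) * x^(q-b)) * A (u+a) (v+b) := by
        refine Finset.sum_congr rfl fun a _ => ?_
        rw [hQ]
        simp only
        rw [Finset.mul_sum]
        refine Finset.sum_congr rfl fun b _ => ?_
        ring
      rw [this, hx]
      exact ih u v (by omega) (by omega)
    rw [hT1, hT4]
    have hx2 : x^2 = c^2 := by rw [hx]; ring
    rw [hx2]
    have hfinal := pascal_step (c^2) (fun j => A (u+j) (v+j)) q
    have hidx : ∀ j ∈ Finset.range (q+1),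
        (q.choose j : ℂ) * (c^2)^(q-j) * A ((u+1)+j) ((v+1)+j)
          = (q.choose j : ℂ) * (c^2)^(q-j) * A (u+(j+1)) (v+(j+1)) := by
      intro j _
      have h1 : (u+1) + j = u + (j+1) := by omega
      have h2 : (v+1) + j = v + (j+1) := by omega
      rw [h1, h2]
    rw [Finset.sum_congr rfl hidx]
    linear_combination hcancel - hfinal

lemma hasDerivAt_iter {f : ℝ → ℂ} {n : ℕ} (hf : ContDiff ℝ (n : ℕ) f) {i : ℕ} (hi : i < n)
    (t : ℝ) : HasDerivAt (iteratedDeriv i f) (iteratedDeriv (i+1) f t) t := by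
  have hd := ((hf.differentiable_iteratedDeriv i (by exact_mod_cast hi)) t).hasDerivAt
  rw [iteratedDeriv_succ]
  exact hd

lemma DIter_succ (c : ℝ) (k : ℕ) (f : ℝ → ℂ) : DIter c (k+1) f = DOp c (DIter c k f) :=
  Function.iterate_succ_apply' _ _ _

lemma DIter_eq_sum {c : ℝ} {f : ℝ → ℂ} {n : ℕ} (hf : ContDiff ℝ (n:ℕ) f) {q : ℕ} (hq : q ≤ n) :
    DIter c q f = fun t => ∑ a ∈ Finset.range (q+1),
      (q.choose a : ℂ) * (-(c:ℂ)) ^ (q-a) * iteratedDeriv a f t := by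
  induction q with
  | zero => funext t; simp [DIter]
  | succ q ih =>
    funext t
    rw [DIter_succ, ih (by omega)]
    have hD : HasDerivAt (fun t => ∑ a ∈ Finset.range (q+1),
          (q.choose a : ℂ) * (-(c:ℂ)) ^ (q-a) * iteratedDeriv a f t)
        (∑ a ∈ Finset.range (q+1),
          (q.choose a : ℂ) * (-(c:ℂ)) ^ (q-a) * iteratedDeriv (a+1) f t) t := by
      refine HasDerivAt.fun_sum fun a ha => ?_
      rw [Finset.mem_range] at ha
      exact (hasDerivAt_iter hf (by omega) t).const_mul _
    show deriv (fun t => ∑ a ∈ Finset.range (q+1),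
        (q.choose a : ℂ) * (-(c:ℂ)) ^ (q-a) * iteratedDeriv a f t) t - (c:ℂ) * _ = _
    rw [hD.deriv, pascal_step (-(c:ℂ)) (fun a => iteratedDeriv a f t) q]
    ring

lemma hasDerivAt_DIter {c : ℝ} {f : ℝ → ℂ} {n : ℕ} (hf : ContDiff ℝ (n:ℕ) f) {j : ℕ}
    (hj : j < n) (t : ℝ) :
    HasDerivAt (DIter c j f) (DIter c (j+1) f t + (c:ℂ) * DIter c j f t) t := by
  have h1 := DIter_eq_sum (c := c) hf hj.le
  have hD : HasDerivAt (fun t => ∑ a ∈ Finset.range (j+1),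
        (j.choose a : ℂ) * (-(c:ℂ)) ^ (j-a) * iteratedDeriv a f t)
      (∑ a ∈ Finset.range (j+1),
        (j.choose a : ℂ) * (-(c:ℂ)) ^ (j-a) * iteratedDeriv (a+1) f t) t := by
    refine HasDerivAt.fun_sum fun a ha => ?_
    rw [Finset.mem_range] at ha
    exact (hasDerivAt_iter hf (by omega) t).const_mul _
  rw [h1]
  convert hD using 1
  beta_reduce
  have h2 := congrFun (DIter_eq_sum (c := c) hf (show j+1 ≤ n from hj)) t
  rw [h2, pascal_step (-(c:ℂ)) (fun a => iteratedDeriv a f t) j]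
  ring

lemma DIter_inv_sum {c : ℝ} {f : ℝ → ℂ} {n : ℕ} (hf : ContDiff ℝ (n:ℕ) f) {m : ℕ}
    (hm : m ≤ n) (t : ℝ) :
    iteratedDeriv m f t = ∑ j ∈ Finset.range (m+1),
      (m.choose j : ℂ) * (c:ℂ)^(m-j) * DIter c j f t := by
  induction m generalizing t with
  | zero => simp [DIter]
  | succ m ih =>
    have ihf : iteratedDeriv m f = fun t => ∑ j ∈ Finset.range (m+1),
        (m.choose j : ℂ) * (c:ℂ)^(m-j) * DIter c j f t := funext fun t => ih (by omega) t
    rw [iteratedDeriv_succ, ihf]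
    have hD : HasDerivAt (fun t => ∑ j ∈ Finset.range (m+1),
          (m.choose j : ℂ) * (c:ℂ)^(m-j) * DIter c j f t)
        (∑ j ∈ Finset.range (m+1),
          (m.choose j : ℂ) * (c:ℂ)^(m-j) * (DIter c (j+1) f t + (c:ℂ) * DIter c j f t)) t := by
      refine HasDerivAt.fun_sum fun j hj => ?_
      rw [Finset.mem_range] at hj
      exact (hasDerivAt_DIter hf (by omega) t).const_mul _
    rw [hD.deriv, pascal_step (c:ℂ) (fun j => DIter c j f t) m]
    rw [Finset.mul_sum, ← Finset.sum_add_distrib]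
    exact Finset.sum_congr rfl fun j _ => by ring

lemma iteratedDeriv_mul_exp {f : ℝ → ℂ} {n : ℕ} (hf : ContDiff ℝ (n:ℕ) f) (b : ℝ) {j : ℕ}
    (hj : j ≤ n) (t : ℝ) :
    iteratedDeriv j (fun s : ℝ => f s * Complex.exp (-(b:ℂ) * s)) t
      = DIter b j f t * Complex.exp (-(b:ℂ) * t) := by
  induction j generalizing t with
  | zero => simp [DIter]
  | succ j ih =>
    have ihf : iteratedDeriv j (fun s : ℝ => f s * Complex.exp (-(b:ℂ) * s))
        = fun t => DIter b j f t * Complex.exp (-(b:ℂ) * t) := funext fun t => ih (by omega) t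
    rw [iteratedDeriv_succ, ihf]
    have hE : HasDerivAt (fun s : ℝ => Complex.exp (-(b:ℂ) * s))
        (Complex.exp (-(b:ℂ) * t) * (-(b:ℂ))) t := by
      have h0 : HasDerivAt (fun s : ℝ => -(b:ℂ) * (s:ℂ)) (-(b:ℂ)) t := by
        simpa using (Complex.ofRealCLM.hasDerivAt (x := t)).const_mul (-(b:ℂ))
      exact h0.cexp
    have hd := (hasDerivAt_DIter (c := b) hf (by omega : j < n) t).fun_mul hE
    rw [hd.deriv, DIter_succ]
    show _ = (deriv (DIter b j f) t - (b:ℂ) * DIter b j f t) * _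
    rw [(hasDerivAt_DIter (c := b) hf (by omega : j < n) t).deriv, DIter_succ]
    ring

lemma DIter_comp_neg (c : ℝ) (f : ℝ → ℂ) (j : ℕ) :
    ∀ t, DIter c j (fun s => f (-s)) t = (-1:ℂ)^j * DIter (-c) j f (-t) := by
  induction j with
  | zero => intro t; simp [DIter]
  | succ j ih =>
    intro t
    rw [DIter_succ, DIter_succ]
    show deriv (DIter c j fun s => f (-s)) t - (c:ℂ) * _ = _
    have hfn : DIter c j (fun s => f (-s)) = fun t => (-1:ℂ)^j * DIter (-c) j f (-t) :=
      funext ih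
    rw [hfn]
    rw [deriv_const_mul_field ((-1:ℂ)^j), deriv_comp_neg (f := DIter (-c) j f)]
    show (-1:ℂ)^j * (-deriv (DIter (-c) j f) (-t)) - (c:ℂ) * ((-1:ℂ)^j * DIter (-c) j f (-t))
      = (-1:ℂ)^(j+1) * (deriv (DIter (-c) j f) (-t) - ((-c : ℝ):ℂ) * DIter (-c) j f (-t))
    push_cast
    ring

lemma poly_bound {g : ℝ → ℂ} {n : ℕ} (hg : ContDiff ℝ (n:ℕ) g) {a : ℝ}
    (h0 : ∀ t < a, iteratedDeriv n g t = 0) :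
    ∀ k m, m + k = n → ∃ C, 0 ≤ C ∧ ∀ t < a, ‖iteratedDeriv m g t‖ ≤ C * (1+(a-t))^k := by
  intro k
  induction k with
  | zero =>
    intro m hm
    refine ⟨0, le_rfl, fun t ht => ?_⟩
    have : m = n := by omega
    rw [this, h0 t ht]
    simp
  | succ k ih =>
    intro m hm
    obtain ⟨C, hC0, hC⟩ := ih (m+1) (by omega)
    have hcont : ContinuousOn (iteratedDeriv m g) (Set.Icc (a-1) a) :=
      (hg.continuous_iteratedDeriv m (by exact_mod_cast (by omega : m ≤ n))).continuousOn
    obtain ⟨K, hK⟩ := IsCompact.exists_bound_of_continuousOn isCompact_Icc hcont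
    have hK0 : 0 ≤ K := le_trans (norm_nonneg _) (hK a (by constructor <;> linarith))
    refine ⟨K + C, by linarith, fun t ht => ?_⟩
    have hbase : (1:ℝ) ≤ 1 + (a - t) := by linarith
    have hpow1 : (1:ℝ) ≤ (1+(a-t))^(k+1) := one_le_pow₀ hbase
    by_cases htt : t ≤ a - 1
    · have hdiff : ∀ x ∈ Set.Icc t (a-1), DifferentiableAt ℝ (iteratedDeriv m g) x :=
        fun x _ => ((hg.differentiable_iteratedDeriv m
          (by exact_mod_cast (by omega : m < n))) x)
      have hbound : ∀ x ∈ Set.Icc t (a-1),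
          ‖deriv (iteratedDeriv m g) x‖ ≤ C * (1+(a-t))^k := by
        intro x hx
        rw [← iteratedDeriv_succ]
        refine (hC x (by linarith [hx.2] : x < a)).trans ?_
        gcongr
        · linarith [hx.2]
        · linarith [hx.1]
      have key := Convex.norm_image_sub_le_of_norm_deriv_le hdiff hbound (convex_Icc _ _)
        (Set.right_mem_Icc.2 (by linarith)) (Set.left_mem_Icc.2 (by linarith))
      -- key : ‖iteratedDeriv m g t - iteratedDeriv m g (a-1)‖ ≤ C*(1+(a-t))^k * ‖t - (a-1)‖
      have hn1 : ‖t - (a-1)‖ ≤ 1 + (a-t) := by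
        rw [Real.norm_eq_abs, abs_of_nonpos (by linarith)]
        linarith
      have h2 : ‖iteratedDeriv m g t‖
          ≤ ‖iteratedDeriv m g (a-1)‖ + C*(1+(a-t))^k * ‖t - (a-1)‖ := by
        have := norm_sub_norm_le (iteratedDeriv m g t) (iteratedDeriv m g (a-1))
        linarith [key]
      have h3 : C*(1+(a-t))^k * ‖t - (a-1)‖ ≤ C * (1+(a-t))^(k+1) := by
        have hp : (0:ℝ) ≤ C*(1+(a-t))^k := by positivity
        exact (mul_le_mul_of_nonneg_left hn1 hp).trans_eq (by rw [pow_succ]; ring)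
      have h4 : ‖iteratedDeriv m g (a-1)‖ ≤ K := hK _ (by constructor <;> linarith)
      have h5 : K ≤ K * (1+(a-t))^(k+1) := le_mul_of_one_le_right hK0 hpow1
      calc ‖iteratedDeriv m g t‖ ≤ K + C * (1+(a-t))^(k+1) := by linarith
        _ ≤ K * (1+(a-t))^(k+1) + C * (1+(a-t))^(k+1) := by linarith
        _ = (K + C) * (1+(a-t))^(k+1) := by ring
    · push_neg at htt
      have h4 : ‖iteratedDeriv m g t‖ ≤ K := hK _ (by constructor <;> linarith)
      have h5 : K ≤ (K+C) * (1+(a-t))^(k+1) := by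
        calc K = K * 1 := by ring
          _ ≤ (K+C) * (1+(a-t))^(k+1) := by
            apply mul_le_mul (by linarith) hpow1 zero_le_one (by linarith)
      linarith

lemma poly_exp {n : ℕ} {ε : ℝ} (hε : 0 < ε) :
    ∃ K, 0 ≤ K ∧ ∀ y, 0 ≤ y → (1+y)^n ≤ K * Real.exp (ε * y) := by
  rcases Nat.eq_zero_or_pos n with h | h
  · refine ⟨1, zero_le_one, fun y hy => ?_⟩
    rw [h]
    simp only [pow_zero, one_mul]
    exact Real.one_le_exp (by positivity)
  · refine ⟨(1 + n/ε)^n, by positivity, fun y hy => ?_⟩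
    have hn : (0:ℝ) < n := by exact_mod_cast h
    have h2 : ε*y/n + 1 ≤ Real.exp (ε*y/n) := Real.add_one_le_exp _
    have h3 : (1 + n/ε) * (1 + ε*y/n) = 1 + y + (ε*y/n + n/ε) := by
      field_simp
      ring
    have h4 : 1 + y ≤ (1 + n/ε) * (1 + ε*y/n) := by
      rw [h3]
      have : 0 ≤ ε*y/n := by positivity
      have : 0 ≤ n/ε := by positivity
      linarith
    have h5 : (1 + n/ε) * (1 + ε*y/n) ≤ (1 + n/ε) * Real.exp (ε*y/n) := by
      apply mul_le_mul_of_nonneg_left (by linarith) (by positivity)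
    calc (1+y)^n ≤ ((1 + n/ε) * Real.exp (ε*y/n))^n :=
          pow_le_pow_left₀ (by linarith) (h4.trans h5) n
      _ = (1+n/ε)^n * (Real.exp (ε*y/n))^n := mul_pow _ _ _
      _ = (1+n/ε)^n * Real.exp (ε*y) := by
          rw [← Real.exp_nat_mul]
          congr 1
          field_simp

lemma tail_decay_Iio {f : ℝ → ℂ} {q : ℕ} (hf : ContDiff ℝ (q:ℕ) f) {b a : ℝ} (hb : 0 < b)
    (h0 : ∀ t < a, DIter b q f t = 0) {m : ℕ} (hm : m ≤ q) :
    ∃ C, ∀ t < a, ‖iteratedDeriv m f t‖ ≤ C * Real.exp ((b/2) * t) := by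
  set g : ℝ → ℂ := fun s => f s * Complex.exp (-(b:ℂ) * s) with hgdef
  have hgsm : ContDiff ℝ (q:ℕ) g := by
    apply hf.mul
    exact Complex.contDiff_exp.comp ((contDiff_const.mul Complex.ofRealCLM.contDiff))
  have hg0 : ∀ t < a, iteratedDeriv q g t = 0 := by
    intro t ht
    rw [hgdef, iteratedDeriv_mul_exp hf b le_rfl t, h0 t ht, zero_mul]
  have hbnd : ∀ j, j ≤ q → ∃ C, 0 ≤ C ∧ ∀ t < a, ‖iteratedDeriv j g t‖ ≤ C * (1+(a-t))^q := by
    intro j hj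
    obtain ⟨C, hC0, hC⟩ := poly_bound hgsm hg0 (q - j) j (by omega)
    refine ⟨C, hC0, fun t ht => (hC t ht).trans ?_⟩
    exact mul_le_mul_of_nonneg_left (pow_le_pow_right₀ (by linarith) (by omega)) hC0
  choose! CC hCC0 hCC using hbnd
  obtain ⟨K, hK0, hK⟩ := poly_exp (n := q) (ε := b/2) (by positivity)
  set M : ℝ := ∑ j ∈ Finset.range (m+1), (m.choose j : ℝ) * b^(m-j) * CC j with hM
  have hM0 : 0 ≤ M := Finset.sum_nonneg fun j hj => by
    have := hCC0 j (by rw [Finset.mem_range] at hj; omega)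
    positivity
  refine ⟨M * K * Real.exp ((b/2)*a), fun t ht => ?_⟩
  have hDg : ∀ j, j ≤ q → ‖DIter b j f t‖ ≤ CC j * (1+(a-t))^q * Real.exp (b*t) := by
    intro j hj
    have h1 : DIter b j f t = iteratedDeriv j g t * Complex.exp ((b:ℂ)*t) := by
      rw [hgdef, iteratedDeriv_mul_exp hf b hj t, mul_assoc, ← Complex.exp_add]
      simp
    rw [h1, norm_mul]
    have h2 : ‖Complex.exp ((b:ℂ)*t)‖ = Real.exp (b*t) := by
      rw [show ((b:ℂ)*t) = ((b*t : ℝ) : ℂ) by push_cast; ring, Complex.norm_exp_ofReal]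
    rw [h2]
    exact mul_le_mul_of_nonneg_right (hCC j hj t ht) (Real.exp_nonneg _)
  have hexp : (1+(a-t))^q * Real.exp (b*t) ≤ K * Real.exp ((b/2)*a) * Real.exp ((b/2)*t) := by
    have h1 := hK (a-t) (by linarith)
    calc (1+(a-t))^q * Real.exp (b*t) ≤ (K * Real.exp ((b/2)*(a-t))) * Real.exp (b*t) :=
          mul_le_mul_of_nonneg_right h1 (Real.exp_nonneg _)
      _ = K * Real.exp ((b/2)*a) * Real.exp ((b/2)*t) := by
          rw [mul_assoc, ← Real.exp_add, mul_assoc, ← Real.exp_add]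
          congr 2
          ring
  calc ‖iteratedDeriv m f t‖
      = ‖∑ j ∈ Finset.range (m+1), (m.choose j : ℂ) * (b:ℂ)^(m-j) * DIter b j f t‖ := by
        rw [← DIter_inv_sum hf hm t]
    _ ≤ ∑ j ∈ Finset.range (m+1), ‖(m.choose j : ℂ) * (b:ℂ)^(m-j) * DIter b j f t‖ :=
        norm_sum_le _ _
    _ ≤ ∑ j ∈ Finset.range (m+1),
          (m.choose j : ℝ) * b^(m-j) * CC j * (K * Real.exp ((b/2)*a) * Real.exp ((b/2)*t)) := by
        refine Finset.sum_le_sum fun j hj => ?_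
        rw [Finset.mem_range] at hj
        have hjq : j ≤ q := by omega
        rw [norm_mul, norm_mul]
        have e1 : ‖((m.choose j : ℕ) : ℂ)‖ = (m.choose j : ℝ) := by
          rw [show ((m.choose j : ℕ) : ℂ) = ((m.choose j : ℝ) : ℂ) by push_cast; rfl]
          rw [Complex.norm_real, Real.norm_eq_abs, abs_of_nonneg (by positivity)]
        have e2 : ‖(b:ℂ)^(m-j)‖ = b^(m-j) := by
          rw [norm_pow, Complex.norm_real, Real.norm_eq_abs, abs_of_nonneg hb.le]
        rw [e1, e2]
        calc (m.choose j : ℝ) * b^(m-j) * ‖DIter b j f t‖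
            ≤ (m.choose j : ℝ) * b^(m-j) * (CC j * ((1+(a-t))^q * Real.exp (b*t))) := by
              have hd := hDg j hjq
              have : (0:ℝ) ≤ (m.choose j : ℝ) * b^(m-j) := by positivity
              refine mul_le_mul_of_nonneg_left ?_ this
              rw [← mul_assoc]
              exact hd
          _ ≤ (m.choose j : ℝ) * b^(m-j) * (CC j * (K * Real.exp ((b/2)*a) * Real.exp ((b/2)*t))) := by
              have h1 : (0:ℝ) ≤ (m.choose j : ℝ) * b^(m-j) := by positivity
              refine mul_le_mul_of_nonneg_left ?_ h1
              exact mul_le_mul_of_nonneg_left hexp (hCC0 j hjq)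
          _ = (m.choose j : ℝ) * b^(m-j) * CC j * (K * Real.exp ((b/2)*a) * Real.exp ((b/2)*t)) := by
              ring
    _ = M * (K * Real.exp ((b/2)*a) * Real.exp ((b/2)*t)) := by
        rw [hM, ← Finset.sum_mul]
    _ = M * K * Real.exp ((b/2)*a) * Real.exp ((b/2)*t) := by ring

lemma tail_decay_Ioi {f : ℝ → ℂ} {q : ℕ} (hf : ContDiff ℝ (q:ℕ) f) {b a' : ℝ} (hb : 0 < b)
    (h0 : ∀ t > a', DIter (-b) q f t = 0) {m : ℕ} (hm : m ≤ q) :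
    ∃ C, ∀ t > a', ‖iteratedDeriv m f t‖ ≤ C * Real.exp (-((b/2) * t)) := by
  set F : ℝ → ℂ := fun s => f (-s) with hF
  have hFsm : ContDiff ℝ (q:ℕ) F := hf.comp contDiff_neg
  have h0' : ∀ t < -a', DIter b q F t = 0 := by
    intro t ht
    rw [hF]
    rw [DIter_comp_neg b f q t, h0 (-t) (by linarith), mul_zero]
  obtain ⟨C, hC⟩ := tail_decay_Iio hFsm hb h0' hm
  refine ⟨C, fun t ht => ?_⟩
  have h1 := hC (-t) (by linarith)
  have h2 : iteratedDeriv m F (-t) = ((-1:ℝ)^m) • iteratedDeriv m f t := by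
    rw [hF]
    have := iteratedDeriv_comp_neg m f (-t)
    simpa using this
  rw [h2] at h1
  rw [norm_smul, Real.norm_eq_abs, abs_pow, abs_neg, abs_one, one_pow, one_mul] at h1
  convert h1 using 3
  ring

lemma int_exp_Iic (b a : ℝ) (hb : 0 < b) :
    IntegrableOn (fun t : ℝ => Real.exp (b*t)) (Set.Iic a) volume := by
  have h := exp_neg_integrableOn_Ioi (-a) hb
  have h2 := (MeasurePreserving.integrableOn_comp_preimage
    (Measure.measurePreserving_neg (volume : Measure ℝ))
    (Homeomorph.neg ℝ).measurableEmbedding).2 h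
  have hpre : (Neg.neg ⁻¹' Set.Ioi (-a) : Set ℝ) = Set.Iio a := by
    ext x
    simp only [Set.mem_preimage, Set.mem_Ioi, Set.mem_Iio]
    constructor <;> intro hx <;> linarith
  rw [hpre] at h2
  have h3 : IntegrableOn (fun t : ℝ => Real.exp (b*t)) (Set.Iio a) volume := by
    apply h2.congr_fun _ measurableSet_Iio
    intro x _
    simp only [Function.comp_apply]
    rw [show -b * -x = b * x by ring]
  rwa [← integrableOn_Iic_iff_integrableOn_Iio] at h3

lemma memL2_of_exp_bounds {f : ℝ → ℂ} (hf : Continuous f) {b a a' C C' : ℝ} (hb : 0 < b)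
    (haa : a ≤ a')
    (h1 : ∀ t < a, ‖f t‖ ≤ C * Real.exp (b*t))
    (h2 : ∀ t > a', ‖f t‖ ≤ C' * Real.exp (-(b*t))) :
    MemLp f 2 (volume : Measure ℝ) := by
  rw [memLp_two_iff_integrable_sq_norm hf.aestronglyMeasurable]
  have hmeas : AEStronglyMeasurable (fun t => ‖f t‖^2) (volume : Measure ℝ) :=
    ((hf.norm.pow 2)).aestronglyMeasurable
  rw [← integrableOn_univ]
  have hsplit : (Set.univ : Set ℝ)
      = Set.Iic (a-1) ∪ (Set.Icc (a-1) (a'+1) ∪ Set.Ici (a'+1)) := by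
    ext x
    simp only [Set.mem_univ, Set.mem_union, Set.mem_Iic, Set.mem_Icc, Set.mem_Ici, true_iff]
    by_cases hx1 : x ≤ a-1
    · exact Or.inl hx1
    · by_cases hx2 : x ≤ a'+1
      · exact Or.inr (Or.inl ⟨by linarith, hx2⟩)
      · exact Or.inr (Or.inr (by linarith))
  rw [hsplit]
  refine IntegrableOn.union ?_ (IntegrableOn.union ?_ ?_)
  · have hig : IntegrableOn (fun t : ℝ => C^2 * Real.exp ((2*b)*t)) (Set.Iic (a-1)) volume :=
      (int_exp_Iic (2*b) (a-1) (by linarith)).const_mul _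
    refine Integrable.mono' hig hmeas.restrict ?_
    rw [ae_restrict_iff' measurableSet_Iic]
    refine Filter.Eventually.of_forall fun t ht => ?_
    have htlt : t < a := by simp only [Set.mem_Iic] at ht; linarith
    rw [Real.norm_eq_abs, abs_of_nonneg (by positivity)]
    calc ‖f t‖^2 ≤ (C * Real.exp (b*t))^2 :=
          pow_le_pow_left₀ (norm_nonneg _) (h1 t htlt) 2
      _ = C^2 * Real.exp ((2*b)*t) := by
          rw [mul_pow, pow_two (Real.exp _), ← Real.exp_add]
          congr 2
          ring
  · exact (hf.norm.pow 2).integrableOn_Icc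
  · have hig : IntegrableOn (fun t : ℝ => C'^2 * Real.exp (-(2*b)*t)) (Set.Ici (a'+1)) volume := by
      have hbase : IntegrableOn (fun t : ℝ => Real.exp (-(2*b)*t)) (Set.Ici (a'+1)) volume :=
        (integrableOn_Ici_iff_integrableOn_Ioi).mpr (exp_neg_integrableOn_Ioi _ (by linarith))
      exact hbase.const_mul _
    refine Integrable.mono' hig hmeas.restrict ?_
    rw [ae_restrict_iff' measurableSet_Ici]
    refine Filter.Eventually.of_forall fun t ht => ?_
    have htgt : t > a' := by simp only [Set.mem_Ici] at ht; linarith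
    rw [Real.norm_eq_abs, abs_of_nonneg (by positivity)]
    calc ‖f t‖^2 ≤ (C' * Real.exp (-(b*t)))^2 :=
          pow_le_pow_left₀ (norm_nonneg _) (h2 t htgt) 2
      _ = C'^2 * Real.exp (-(2*b)*t) := by
          rw [mul_pow, pow_two (Real.exp _), ← Real.exp_add]
          congr 2
          ring

lemma memL2_conj {f : ℝ → ℂ} (h : MemLp f 2 (volume : Measure ℝ)) :
    MemLp (fun t => (starRingEnd ℂ) (f t)) 2 (volume : Measure ℝ) := by
  refine ⟨?_, ?_⟩
  · exact Complex.continuous_conj.comp_aestronglyMeasurable h.1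
  · have he : (fun t => (starRingEnd ℂ) (f t)) = (starRingEnd (ℝ → ℂ)) f := rfl
    rw [he, eLpNorm_conj]
    exact h.2

lemma int_mul_L2 {u v : ℝ → ℂ} (hu : MemLp u 2 (volume : Measure ℝ))
    (hv : MemLp v 2 (volume : Measure ℝ)) :
    Integrable (fun t => u t * v t) (volume : Measure ℝ) := by
  rw [← memLp_one_iff_integrable]
  have h := hv.smul (φ := u) hu (r := 1)
  have he : (u • v) = fun t => u t * v t := rfl
  rwa [he] at h

end AuxSpline

/-- **Lemma (Binomial expansion identity for the fundamental integral).**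
Let `σ` be any natural `L_ξ`-spline on `τ` and let `ψ ∈ C^p(ℝ)` with
`ψ^(m) ∈ L²(ℝ)` for all `m ∈ {0, ..., p}`. Then
`∫ (d/dt - |ξ|)^p σ ⋅ conj((d/dt - |ξ|)^p ψ)
  = Σ_{m=0}^{p} C(p,m) |ξ|^{2(p-m)} ∫ σ^(m) ⋅ conj(ψ^(m))`. -/
theorem fundamental_integral_binomial_expansion
    (n p N : ℕ) (hp : 2 ≤ p) (hN : p ≤ N + 1)
    (ξ : EuclideanSpace ℝ (Fin n)) (hξ : ξ ≠ 0)
    (τ : Fin (N + 1) → ℝ) (hτ : StrictMono τ)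
    (σ : ℝ → ℂ) (hσ : IsNaturalLSpline p N ‖ξ‖ τ σ)
    (ψ : ℝ → ℂ) (hψ : ContDiff ℝ (p : ℕ) ψ)
    (hψL2 : ∀ m ≤ p, MemLp (iteratedDeriv m ψ) 2 volume) :
    ∫ t : ℝ, DIter ‖ξ‖ p σ t * (starRingEnd ℂ) (DIter ‖ξ‖ p ψ t)
      = ∑ m ∈ Finset.range (p + 1), (p.choose m : ℂ) * (‖ξ‖ : ℂ) ^ (2 * (p - m)) *
          ∫ t : ℝ, iteratedDeriv m σ t * (starRingEnd ℂ) (iteratedDeriv m ψ t) := by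
  obtain ⟨hσC, -, -, -, hLtail, hRtail⟩ := hσ
  set c : ℝ := ‖ξ‖ with hcdef
  have hc : (0:ℝ) < c := by
    rw [hcdef]
    exact norm_pos_iff.mpr hξ
  have hp2 : p ≤ 2*p-2 := by omega
  have hσp : ContDiff ℝ (p:ℕ) σ := hσC.of_le (by exact_mod_cast hp2)
  -- L² bounds for derivatives of σ
  have hσL2 : ∀ m, m ≤ p → MemLp (iteratedDeriv m σ) 2 (volume : Measure ℝ) := by
    intro m hm
    obtain ⟨C1, h1⟩ := AuxSpline.tail_decay_Iio hσp hc (fun t ht => hLtail t ht) hm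
    obtain ⟨C2, h2⟩ := AuxSpline.tail_decay_Ioi hσp hc (fun t ht => hRtail t ht) hm
    have hcont : Continuous (iteratedDeriv m σ) :=
      hσp.continuous_iteratedDeriv m (by exact_mod_cast hm)
    have hττ : τ 0 ≤ τ (Fin.last N) := hτ.monotone (Fin.zero_le _)
    exact AuxSpline.memL2_of_exp_bounds hcont (by positivity : (0:ℝ) < c/2) hττ
      (fun t ht => h1 t ht) (fun t ht => h2 t ht)
  have hψconjL2 : ∀ m, m ≤ p → MemLp (fun t => (starRingEnd ℂ) (iteratedDeriv m ψ t)) 2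
      (volume : Measure ℝ) := fun m hm => AuxSpline.memL2_conj (hψL2 m hm)
  have Hint : ∀ i, i ≤ p → ∀ j, j ≤ p → Integrable
      (fun t => iteratedDeriv i σ t * (starRingEnd ℂ) (iteratedDeriv j ψ t))
      (volume : Measure ℝ) :=
    fun i hi j hj => AuxSpline.int_mul_L2 (hσL2 i hi) (hψconjL2 j hj)
  set A : ℕ → ℕ → ℂ :=
    fun i j => ∫ t : ℝ, iteratedDeriv i σ t * (starRingEnd ℂ) (iteratedDeriv j ψ t) with hAdef
  have hA : ∀ i j, i+1 ≤ p → j+1 ≤ p → A (i+1) j = - A i (j+1) := by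
    intro i j hi hj
    have hu : ∀ x : ℝ, HasDerivAt (iteratedDeriv i σ) (iteratedDeriv (i+1) σ x) x :=
      fun x => AuxSpline.hasDerivAt_iter hσC (by omega) x
    have hv : ∀ x : ℝ, HasDerivAt (fun t => (starRingEnd ℂ) (iteratedDeriv j ψ t))
        ((starRingEnd ℂ) (iteratedDeriv (j+1) ψ x)) x := by
      intro x
      exact (AuxSpline.hasDerivAt_iter hψ (by omega : j < p) x).star
    have key := integral_mul_deriv_eq_deriv_mul_of_integrable (fun x _ => hu x) (fun x _ => hv x)
      (Hint i (by omega) (j+1) (by omega)) (Hint (i+1) (by omega) j (by omega))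
      (Hint i (by omega) j (by omega))
    simp only [hAdef]
    rw [show (∫ t : ℝ, iteratedDeriv i σ t * (starRingEnd ℂ) (iteratedDeriv (j+1) ψ t))
        = - ∫ t : ℝ, iteratedDeriv (i+1) σ t * (starRingEnd ℂ) (iteratedDeriv j ψ t) from key,
      neg_neg]
  -- expand DIter in the integrand
  have hexσ := AuxSpline.DIter_eq_sum (c := c) hσp (le_refl p)
  have hexψ := AuxSpline.DIter_eq_sum (c := c) hψ (le_refl p)
  have hintegrand : ∀ t : ℝ, DIter c p σ t * (starRingEnd ℂ) (DIter c p ψ t)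
      = ∑ a ∈ Finset.range (p+1), ∑ b ∈ Finset.range (p+1),
          (((p.choose a : ℂ) * (-(c:ℂ))^(p-a)) * ((p.choose b : ℂ) * (-(c:ℂ))^(p-b)))
            * (iteratedDeriv a σ t * (starRingEnd ℂ) (iteratedDeriv b ψ t)) := by
    intro t
    rw [congrFun hexσ t, congrFun hexψ t, map_sum, Finset.sum_mul_sum]
    refine Finset.sum_congr rfl fun a _ => Finset.sum_congr rfl fun b _ => ?_
    rw [map_mul, map_mul, map_pow, map_neg, Complex.conj_ofReal, map_natCast]
    ring
  calc ∫ t : ℝ, DIter c p σ t * (starRingEnd ℂ) (DIter c p ψ t)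
      = ∫ t : ℝ, ∑ a ∈ Finset.range (p+1), ∑ b ∈ Finset.range (p+1),
          (((p.choose a : ℂ) * (-(c:ℂ))^(p-a)) * ((p.choose b : ℂ) * (-(c:ℂ))^(p-b)))
            * (iteratedDeriv a σ t * (starRingEnd ℂ) (iteratedDeriv b ψ t)) := by
        exact integral_congr_ae (Filter.Eventually.of_forall hintegrand)
    _ = ∑ a ∈ Finset.range (p+1), ∑ b ∈ Finset.range (p+1),
          (((p.choose a : ℂ) * (-(c:ℂ))^(p-a)) * ((p.choose b : ℂ) * (-(c:ℂ))^(p-b))) * A a b := by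
        rw [integral_finset_sum]
        · refine Finset.sum_congr rfl fun a ha => ?_
          rw [Finset.mem_range] at ha
          rw [integral_finset_sum]
          · refine Finset.sum_congr rfl fun b hb => ?_
            rw [Finset.mem_range] at hb
            rw [integral_const_mul]
          · intro b hb
            rw [Finset.mem_range] at hb
            exact (Hint a (by omega) b (by omega)).const_mul _
        · intro a ha
          rw [Finset.mem_range] at ha
          refine integrable_finset_sum _ fun b hb => ?_
          rw [Finset.mem_range] at hb
          exact (Hint a (by omega) b (by omega)).const_mul _
    _ = ∑ j ∈ Finset.range (p+1), (p.choose j : ℂ) * (((c:ℂ))^2)^(p-j) * A j j := by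
        have halg := AuxSpline.key_algebra ((c:ℝ):ℂ) p A hA p 0 0 (by omega) (by omega)
        simp only [Nat.zero_add] at halg
        exact halg
    _ = ∑ m ∈ Finset.range (p + 1), (p.choose m : ℂ) * ((c:ℝ) : ℂ) ^ (2 * (p - m)) *
          ∫ t : ℝ, iteratedDeriv m σ t * (starRingEnd ℂ) (iteratedDeriv m ψ t) := by
        refine Finset.sum_congr rfl fun m _ => ?_
        rw [pow_mul]
end
end

section
/- For each nonzero ξ ∈ ℝ^n and integer p ≥ 2, the function φ_ξ(t) := ((−1)^p / (γ_p |ξ|^{2p−1})) e^{−|ξ||t|} Σ_{l=0}^{p−1} c_l |ξ|^l |t|^l, where c_l = (2p−2−l)! 2^l / (l!(p−1−l)!) and γ_p = (p−1)! 2^{2p−1}, is integrable on ℝ and its Fourier transform satisfies ∫_ℝ e^{−itu} φ_ξ(t) dt = (−1)^p / (u² + |ξ|²)^p for all u ∈ ℝ; equivalently, φ_ξ is the unique integrable fundamental solution of the operator L_ξ = (d²/dt² − |ξ|²)^p, i.e. L_ξ φ_ξ = δ_0 in the sense of distributions. -/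
open MeasureTheory Finset

noncomputable section

/-- The coefficients `c_l = (2p-2-l)! 2^l / (l! (p-1-l)!)`. -/
def cCoef (p l : ℕ) : ℝ :=
  ((2 * p - 2 - l).factorial : ℝ) * 2 ^ l / ((l.factorial : ℝ) * ((p - 1 - l).factorial : ℝ))

/-- The constant `γ_p = (p-1)! 2^{2p-1}`. -/
def gammaP (p : ℕ) : ℝ := ((p - 1).factorial : ℝ) * 2 ^ (2 * p - 1)

/-- The normalized kernel `φ̃_ξ(t) = e^{-|ξ||t|} Σ_{l=0}^{p-1} c_l |ξ|^l |t|^l` (with `c = |ξ|`). -/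
def phiTilde (p : ℕ) (c : ℝ) (t : ℝ) : ℝ :=
  Real.exp (-(c * |t|)) * ∑ l ∈ Finset.range p, cCoef p l * c ^ l * |t| ^ l

/-- The fundamental solution `φ_ξ(t) = ((-1)^p / (γ_p |ξ|^{2p-1})) φ̃_ξ(t)` of `L_ξ`. -/
def phiXi (p : ℕ) (c : ℝ) (t : ℝ) : ℂ :=
  (((-1 : ℝ) ^ p / (gammaP p * c ^ (2 * p - 1)) * phiTilde p c t : ℝ) : ℂ)

open Filter Set
open scoped Topology

section PhiXiAux

/-- Vandermonde-type convolution. -/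
lemma choose_conv (m j N : ℕ) :
    ∑ k ∈ Finset.range (N + 1), (m + k).choose m * (j + (N - k)).choose j
      = (m + j + N + 1).choose N := by
  have hu : PowerSeries.invOneSubPow ℤ (m+1) * PowerSeries.invOneSubPow ℤ (j+1)
      = PowerSeries.invOneSubPow ℤ (m + j + 1 + 1) := by
    rw [PowerSeries.invOneSubPow_eq_inv_one_sub_pow, PowerSeries.invOneSubPow_eq_inv_one_sub_pow,
      PowerSeries.invOneSubPow_eq_inv_one_sub_pow, ← pow_add]
    congr 1
    omega
  have hval := congrArg (fun x => PowerSeries.coeff (R := ℤ) N x.val) hu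
  simp only [Units.val_mul, PowerSeries.invOneSubPow_val_succ_eq_mk_add_choose,
    PowerSeries.coeff_mul, PowerSeries.coeff_mk] at hval
  rw [Finset.Nat.sum_antidiagonal_eq_sum_range_succ_mk] at hval
  have : ((∑ k ∈ Finset.range (N + 1), (m + k).choose m * (j + (N - k)).choose j : ℕ) : ℤ)
      = ((m + j + 1 + N).choose (m + j + 1) : ℤ) := by
    push_cast
    simpa using hval
  have h2 : (m + j + 1 + N).choose (m + j + 1) = (m + j + N + 1).choose N := by
    rw [show m + j + N + 1 = m + j + 1 + N by omega, ← Nat.choose_symm (by omega)]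
    congr 1
    omega
  exact_mod_cast h2 ▸ this

lemma one_sided (q : ℕ) (a b : ℂ) :
    ∑ k ∈ range (q+1), ((q+k).choose k : ℂ) * (a+b)^(q-k) * (a^(q+1) * b^k)
      = ∑ i ∈ range (q+1), ((2*q+1).choose (q+1+i) : ℂ) * (a^(q+1+i) * b^(q-i)) := by
  have key : ∀ k ∈ range (q+1), ((q+k).choose k : ℂ) * (a+b)^(q-k) * (a^(q+1) * b^k)
      = ∑ i ∈ range (q+1), (((q+k).choose k * (q-k).choose i : ℕ) : ℂ) * (a^(q+1+i) * b^(q-i)) := by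
    intro k hk
    rw [Finset.mem_range] at hk
    rw [add_pow, Finset.mul_sum, Finset.sum_mul]
    have hz : ∀ i ∈ range (q+1), i ∉ range (q - k + 1) →
        ((q+k).choose k : ℂ) * (a ^ i * b ^ (q-k-i) * ((q-k).choose i : ℂ)) * (a^(q+1) * b^k)
          = 0 := by
      intro i _ hi
      rw [Finset.mem_range] at hi
      rw [Nat.choose_eq_zero_of_lt (show q - k < i by omega)]
      simp
    rw [Finset.sum_subset (Finset.range_subset_range.mpr (show q - k + 1 ≤ q + 1 by omega)) hz]
    apply Finset.sum_congr rfl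
    intro i _
    by_cases hik : i ≤ q - k
    · have h1 : q - k - i + k = q - i := by omega
      push_cast
      rw [show q + 1 + i = i + (q + 1) by omega, pow_add, ← h1, pow_add]
      ring
    · rw [Nat.choose_eq_zero_of_lt (show q - k < i by omega)]
      simp
  rw [Finset.sum_congr rfl key, Finset.sum_comm]
  apply Finset.sum_congr rfl
  intro i hi
  rw [Finset.mem_range] at hi
  have hi' : i ≤ q := by omega
  rw [← Finset.sum_mul, ← Nat.cast_sum]
  have hz : ∀ k ∈ range (q+1), k ∉ range (q - i + 1) →
      (q+k).choose k * (q-k).choose i = 0 := by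
    intro k hk1 hk
    rw [Finset.mem_range] at hk1 hk
    rw [Nat.choose_eq_zero_of_lt (show q - k < i by omega), mul_zero]
  rw [← Finset.sum_subset (Finset.range_subset_range.mpr (show q - i + 1 ≤ q + 1 by omega)) hz]
  have hcongr : ∀ k ∈ Finset.range (q - i + 1),
      (q + k).choose k * (q - k).choose i = (q + k).choose q * (i + (q - i - k)).choose i := by
    intro k hk
    rw [Finset.mem_range] at hk
    congr 1
    · simpa using Nat.choose_symm (Nat.le_add_right q k)
    · congr 1
      omega
  rw [Finset.sum_congr rfl hcongr, choose_conv q i (q - i)]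
  congr 2
  rw [show q + i + (q - i) + 1 = 2*q+1 by omega, show q - i = 2*q+1 - (q+1+i) by omega,
    Nat.choose_symm (show q+1+i ≤ 2*q+1 by omega)]

lemma binom_split (q : ℕ) (a b : ℂ) :
    (a+b)^(2*q+1) = ∑ i ∈ range (q+1), ((2*q+1).choose (q+1+i) : ℂ) *
      (a^(q+1+i) * b^(q-i) + b^(q+1+i) * a^(q-i)) := by
  simp_rw [mul_add, Finset.sum_add_distrib]
  have h2 : ∑ i ∈ range (q+1), ((2*q+1).choose (q+1+i) : ℂ) * (b^(q+1+i) * a^(q-i))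
      = ∑ k ∈ range (q+1), ((2*q+1).choose k : ℂ) * (a^k * b^(2*q+1-k)) := by
    rw [← Finset.sum_range_reflect]
    apply Finset.sum_congr rfl
    intro i hi
    rw [Finset.mem_range] at hi
    rw [show q + 1 - 1 - i = q - i by omega, show q + 1 + (q - i) = 2*q+1 - i by omega,
      show q - (q - i) = i by omega, Nat.choose_symm (show i ≤ 2*q+1 by omega)]
    ring
  have h1 : ∑ i ∈ range (q+1), ((2*q+1).choose (q+1+i) : ℂ) * (a^(q+1+i) * b^(q-i))
      = ∑ k ∈ Finset.Ico (q+1) (2*q+2), ((2*q+1).choose k : ℂ) * (a^k * b^(2*q+1-k)) := by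
    rw [Finset.sum_Ico_eq_sum_range]
    apply Finset.sum_congr (by congr 1; omega)
    intro i hi
    rw [Finset.mem_range] at hi
    rw [show 2*q+1-(q+1+i) = q - i by omega]
  rw [h1, h2, add_comm (∑ k ∈ Finset.Ico (q+1) (2*q+2), ((2*q+1).choose k : ℂ) * (a^k * b^(2*q+1-k)))
    (∑ k ∈ range (q+1), ((2*q+1).choose k : ℂ) * (a^k * b^(2*q+1-k))),
    Finset.sum_range_add_sum_Ico _ (show q+1 ≤ 2*q+2 by omega), add_pow]
  apply Finset.sum_congr (by norm_num)
  intro k _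
  ring

lemma key_identity (q : ℕ) (a b : ℂ) :
    ∑ k ∈ range (q+1), ((q+k).choose k : ℂ) * (a+b)^(q-k) * (a^(q+1) * b^k + b^(q+1) * a^k)
      = (a+b)^(2*q+1) := by
  simp_rw [mul_add, Finset.sum_add_distrib]
  rw [one_sided q a b]
  have h := one_sided q b a
  simp_rw [show b + a = a + b from add_comm b a] at h
  rw [h, binom_split q a b]
  simp_rw [mul_add, Finset.sum_add_distrib]

lemma main_algebra (q : ℕ) (a b : ℂ) :
    ∑ l ∈ range (q+1), (((2*q - l).factorial : ℂ) / ((q-l).factorial : ℂ)) * (a+b)^l *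
        (a^(q+1) * b^(q-l) + b^(q+1) * a^(q-l))
      = (q.factorial : ℂ) * (a+b)^(2*q+1) := by
  rw [← key_identity q a b, Finset.mul_sum, ← Finset.sum_range_reflect]
  apply Finset.sum_congr rfl
  intro j hj
  rw [Finset.mem_range] at hj
  rw [show q + 1 - 1 - j = q - j by omega, show 2*q - (q - j) = q + j by omega,
    show q - (q - j) = j by omega]
  have hfac : ((q+j).factorial : ℂ) = ((q+j).choose j : ℂ) * (q.factorial : ℂ) * (j.factorial : ℂ) := by
    norm_cast
    rw [show (q+j).choose j * q.factorial * j.factorial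
        = (q+j).choose j * j.factorial * (q + j - j).factorial from by
      rw [Nat.add_sub_cancel]; ring]
    exact (Nat.choose_mul_factorial_mul_factorial (Nat.le_add_left j q)).symm
  rw [hfac]
  have h1 : ((j.factorial : ℂ)) ≠ 0 := Nat.cast_ne_zero.mpr (Nat.factorial_ne_zero j)
  field_simp

/-- Integrability of `e^{-c|t|}|t|^l` on `(0,∞)`. -/
lemma integrableOn_exp_abs_pow (c : ℝ) (hc : 0 < c) (l : ℕ) :
    IntegrableOn (fun t : ℝ => Real.exp (-(c * |t|)) * |t| ^ l) (Ioi 0) := by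
  apply integrable_of_isBigO_exp_neg (b := c/2) (by positivity)
  · exact ((Real.continuous_exp.comp (continuous_const.mul continuous_abs).neg).mul
      (continuous_abs.pow l)).continuousOn
  · rw [Asymptotics.isBigO_iff]
    refine ⟨1, ?_⟩
    have h1 : Tendsto (fun x : ℝ => x ^ l * Real.exp (-(c/2 * x))) atTop (𝓝 0) := by
      have h2 := (Real.tendsto_pow_mul_exp_neg_atTop_nhds_zero l).comp
        (tendsto_id.const_mul_atTop (show (0:ℝ) < c/2 by positivity))
      have h3 := h2.const_mul ((c/2) ^ l)⁻¹
      rw [mul_zero] at h3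
      apply h3.congr
      intro x
      simp only [Function.comp_apply, id_eq]
      rw [mul_pow]
      field_simp
    filter_upwards [h1.eventually_le_const one_pos, eventually_gt_atTop 0] with x hx hx0
    rw [abs_of_pos hx0]
    have heq : Real.exp (-(c * x)) * x ^ l
        = (x ^ l * Real.exp (-(c/2 * x))) * Real.exp (-(c/2) * x) := by
      have h4 : Real.exp (-(c * x)) = Real.exp (-(c/2 * x)) * Real.exp (-(c/2) * x) := by
        rw [← Real.exp_add]; ring_nf
      rw [h4]; ring
    have hb : 0 ≤ Real.exp (-(c/2) * x) := Real.exp_nonneg _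
    rw [Real.norm_eq_abs, Real.norm_eq_abs, abs_of_nonneg (by positivity), heq,
      abs_of_nonneg hb]
    exact mul_le_mul_of_nonneg_right hx hb

/-- Integrability of `e^{-c|t|}|t|^l` on `ℝ`. -/
lemma integrable_exp_abs_pow (c : ℝ) (hc : 0 < c) (l : ℕ) :
    Integrable (fun t : ℝ => Real.exp (-(c * |t|)) * |t| ^ l) := by
  have hIoi := integrableOn_exp_abs_pow c hc l
  have hIic : IntegrableOn (fun t : ℝ => Real.exp (-(c * |t|)) * |t| ^ l) (Iic 0) := by
    rw [← Measure.map_neg_eq_self (volume : Measure ℝ)]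
    have m : MeasurableEmbedding fun x : ℝ => -x := (Homeomorph.neg ℝ).measurableEmbedding
    rw [m.integrableOn_map_iff]
    simp_rw [Function.comp_def, abs_neg, neg_preimage, neg_Iic, neg_zero]
    exact (integrableOn_Ici_iff_integrableOn_Ioi).mpr hIoi
  rw [← integrableOn_univ, ← Set.Iic_union_Ioi (a := (0:ℝ))]
  exact hIic.union hIoi

/-- Integrability of `t^l e^{-st}` on `(0,∞)` for complex `s` with positive real part. -/
lemma integrableOn_cpow_exp (s : ℂ) (hs : 0 < s.re) (l : ℕ) :
    IntegrableOn (fun t : ℝ => (t:ℂ) ^ l * Complex.exp (-(s * t))) (Ioi 0) := by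
  apply Integrable.mono' ((integrableOn_exp_abs_pow s.re hs l).congr_fun
    (fun t ht => by beta_reduce; rw [mul_comm]) measurableSet_Ioi)
  · exact ((Complex.continuous_ofReal.pow l).mul
      (Complex.continuous_exp.comp (continuous_const.mul Complex.continuous_ofReal).neg)).aestronglyMeasurable.restrict
  · rw [ae_restrict_iff' measurableSet_Ioi]
    filter_upwards with t ht
    rw [Set.mem_Ioi] at ht
    rw [norm_mul, norm_pow, Complex.norm_real, Complex.norm_exp,
      Real.norm_eq_abs]
    simp only [Complex.neg_re, Complex.mul_re, Complex.ofReal_re, Complex.ofReal_im, mul_zero,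
      sub_zero]
    rw [abs_of_pos ht]

lemma integral_cpow_exp (s : ℂ) (hs : 0 < s.re) :
    ∀ l : ℕ, ∫ t : ℝ in Ioi 0, (t:ℂ) ^ l * Complex.exp (-(s * t))
      = (l.factorial : ℂ) / s ^ (l+1) := by
  have hs0 : s ≠ 0 := fun h => by simp [h] at hs
  have hexp : ∀ z : ℂ, HasDerivAt (fun z : ℂ => Complex.exp (-(s * z)))
      (Complex.exp (-(s * z)) * (-s)) z := by
    intro z
    have h1 : HasDerivAt (fun z : ℂ => -(s * z)) (-s) z := by
      simpa [Pi.neg_def] using ((hasDerivAt_id z).const_mul s).neg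
    exact h1.cexp
  have htend : ∀ l : ℕ, Tendsto (fun t : ℝ => (t:ℂ) ^ l * Complex.exp (-(s * t))) atTop (𝓝 0) := by
    intro l
    rw [tendsto_zero_iff_norm_tendsto_zero]
    have h1 : Tendsto (fun t : ℝ => t ^ l * Real.exp (-(s.re * t))) atTop (𝓝 0) := by
      have h2 := (Real.tendsto_pow_mul_exp_neg_atTop_nhds_zero l).comp
        (tendsto_id.const_mul_atTop hs)
      have h3 := h2.const_mul ((s.re) ^ l)⁻¹
      rw [mul_zero] at h3
      apply h3.congr
      intro x
      simp only [Function.comp_apply, id_eq]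
      rw [mul_pow]
      field_simp
    apply h1.congr'
    filter_upwards [eventually_gt_atTop (0:ℝ)] with t ht
    rw [norm_mul, norm_pow, Complex.norm_real, Complex.norm_exp,
      Real.norm_eq_abs, abs_of_pos ht]
    simp only [Complex.neg_re, Complex.mul_re, Complex.ofReal_re, Complex.ofReal_im, mul_zero,
      sub_zero]
  intro l
  induction l with
  | zero =>
    have hderiv : ∀ x ∈ Ici (0:ℝ), HasDerivAt (fun t : ℝ => -Complex.exp (-(s * t)) / s)
        ((x:ℂ) ^ 0 * Complex.exp (-(s * x))) x := by
      intro x _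
      have h := (((hexp x).neg).div_const s).comp_ofReal
      convert h using 1
      · funext t; simp [Pi.neg_def]
      field_simp
    have hint := (integrableOn_cpow_exp s hs 0)
    have htendF : Tendsto (fun t : ℝ => -Complex.exp (-(s * t)) / s) atTop (𝓝 0) := by
      have := ((htend 0).neg).div_const s
      simpa using this
    have := integral_Ioi_of_hasDerivAt_of_tendsto' hderiv hint htendF
    rw [this]
    simp [Nat.factorial]
    ring
  | succ l ih =>
    have hderiv : ∀ x ∈ Ici (0:ℝ),
        HasDerivAt (fun t : ℝ => -((t:ℂ) ^ (l+1) * Complex.exp (-(s * t))) / s)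
        ((x:ℂ) ^ (l+1) * Complex.exp (-(s * x))
          - ((l:ℂ)+1)/s * ((x:ℂ) ^ l * Complex.exp (-(s * x)))) x := by
      intro x _
      have hpow : HasDerivAt (fun z : ℂ => z ^ (l+1)) (((l:ℂ)+1) * (x:ℂ) ^ l) (x:ℂ) := by
        simpa using hasDerivAt_pow (l+1) (x:ℂ)
      have h := (((hpow.mul (hexp (x:ℂ))).neg).div_const s).comp_ofReal
      convert h using 1
      · funext t; simp [Pi.neg_def]
      field_simp
      ring
    have hint : IntegrableOn (fun x : ℝ => (x:ℂ) ^ (l+1) * Complex.exp (-(s * x))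
        - ((l:ℂ)+1)/s * ((x:ℂ) ^ l * Complex.exp (-(s * x)))) (Ioi 0) :=
      (integrableOn_cpow_exp s hs (l+1)).sub ((integrableOn_cpow_exp s hs l).const_mul _)
    have htendF : Tendsto (fun t : ℝ => -((t:ℂ) ^ (l+1) * Complex.exp (-(s * t))) / s)
        atTop (𝓝 0) := by
      have := ((htend (l+1)).neg).div_const s
      simpa using this
    have heval := integral_Ioi_of_hasDerivAt_of_tendsto' hderiv hint htendF
    rw [integral_sub (integrableOn_cpow_exp s hs (l+1))
      ((integrableOn_cpow_exp s hs l).const_mul _), integral_const_mul, ih] at heval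
    have h0 : (0:ℂ) - -(((0:ℝ):ℂ) ^ (l+1) * Complex.exp (-(s * ((0:ℝ):ℂ)))) / s = 0 := by
      simp
    rw [h0] at heval
    rw [sub_eq_zero] at heval
    rw [heval]
    rw [Nat.factorial_succ]
    push_cast
    rw [div_mul_div_comm, pow_succ]
    congr 1
    ring

lemma integrable_kernel (c : ℝ) (hc : 0 < c) (u : ℝ) (l : ℕ) :
    Integrable (fun t : ℝ => Complex.exp (-(Complex.I * t * u)) *
      ((Real.exp (-(c * |t|)) * |t| ^ l : ℝ) : ℂ)) := by
  apply Integrable.mono' (integrable_exp_abs_pow c hc l)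
  · apply Continuous.aestronglyMeasurable
    fun_prop
  · filter_upwards with t
    rw [norm_mul, Complex.norm_exp, Complex.norm_real, Real.norm_eq_abs]
    have hre : (-(Complex.I * t * u)).re = 0 := by
      simp [Complex.mul_re, Complex.mul_im]
    rw [hre, Real.exp_zero, one_mul, abs_of_nonneg (by positivity)]

lemma integral_kernel (c : ℝ) (hc : 0 < c) (u : ℝ) (l : ℕ) :
    ∫ t : ℝ, Complex.exp (-(Complex.I * t * u)) * ((Real.exp (-(c * |t|)) * |t| ^ l : ℝ) : ℂ)
      = (l.factorial : ℂ) * (1 / ((c:ℂ) - u * Complex.I) ^ (l+1)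
        + 1 / ((c:ℂ) + u * Complex.I) ^ (l+1)) := by
  set f := fun t : ℝ => Complex.exp (-(Complex.I * t * u)) *
    ((Real.exp (-(c * |t|)) * |t| ^ l : ℝ) : ℂ) with hfdef
  have hf : Integrable f := integrable_kernel c hc u l
  have hre1 : (0:ℝ) < ((c:ℂ) + u * Complex.I).re := by
    simpa [Complex.add_re, Complex.mul_re] using hc
  have hre2 : (0:ℝ) < ((c:ℂ) - u * Complex.I).re := by
    simpa [Complex.sub_re, Complex.mul_re] using hc
  have hIoi : ∫ t in Ioi (0:ℝ), f t
      = (l.factorial : ℂ) / ((c:ℂ) + u * Complex.I) ^ (l+1) := by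
    rw [setIntegral_congr_fun measurableSet_Ioi
      (g := fun t : ℝ => (t:ℂ) ^ l * Complex.exp (-(((c:ℂ) + u * Complex.I) * t)))
      (fun t ht => ?_)]
    · exact integral_cpow_exp _ hre1 l
    · rw [Set.mem_Ioi] at ht
      simp only [hfdef]
      rw [abs_of_pos ht, Complex.ofReal_mul, Complex.ofReal_pow, Complex.ofReal_exp,
        Complex.ofReal_neg, Complex.ofReal_mul]
      rw [show Complex.exp (-(Complex.I * t * u)) * (Complex.exp (-((c:ℂ) * t)) * (t:ℂ) ^ l)
          = (t:ℂ) ^ l * (Complex.exp (-(Complex.I * t * u)) * Complex.exp (-((c:ℂ) * t)))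
          from by ring, ← Complex.exp_add]
      congr 2
      ring
  have hIic : ∫ t in Iic (0:ℝ), f t
      = (l.factorial : ℂ) / ((c:ℂ) - u * Complex.I) ^ (l+1) := by
    have hcomp : ∫ x in Ioi (0:ℝ), f (-x) = ∫ t in Iic (0:ℝ), f t := by
      rw [integral_comp_neg_Ioi, neg_zero]
    rw [← hcomp]
    rw [setIntegral_congr_fun measurableSet_Ioi
      (g := fun t : ℝ => (t:ℂ) ^ l * Complex.exp (-(((c:ℂ) - u * Complex.I) * t)))
      (fun t ht => ?_)]
    · exact integral_cpow_exp _ hre2 l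
    · rw [Set.mem_Ioi] at ht
      simp only [hfdef]
      rw [abs_neg, abs_of_pos ht]
      push_cast
      rw [show Complex.exp (-(Complex.I * -(t:ℂ) * (u:ℂ))) * (Complex.exp (-((c:ℂ) * t)) * (t:ℂ) ^ l)
          = (t:ℂ) ^ l * (Complex.exp (-(Complex.I * -(t:ℂ) * (u:ℂ))) * Complex.exp (-((c:ℂ) * t)))
          from by ring, ← Complex.exp_add]
      congr 2
      ring
  rw [← intervalIntegral.integral_Iic_add_Ioi (b := 0) hf.integrableOn hf.integrableOn, hIic, hIoi]
  ring

/-- Per-term algebraic identity. -/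
lemma per_term (l m : ℕ) (a b c : ℂ) (ha : a ≠ 0) (hb : b ≠ 0) (hc : a + b = 2*c) :
    ((((l + 2*m).factorial : ℂ) * 2^l / ((l.factorial : ℂ) * (m.factorial : ℂ))) * c^l) *
      ((l.factorial : ℂ) * (1/b^(l+1) + 1/a^(l+1)))
    = (((l + 2*m).factorial : ℂ) / (m.factorial : ℂ)) * (a+b)^l *
        (a^(l+m+1) * b^m + b^(l+m+1) * a^m) / (a*b)^(l+m+1) := by
  have h2 : (2:ℂ) ≠ 0 := two_ne_zero
  have hcc : c = (a+b)/2 := by rw [hc]; ring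
  have hl : (l.factorial : ℂ) ≠ 0 := Nat.cast_ne_zero.mpr (Nat.factorial_ne_zero l)
  have hm : (m.factorial : ℂ) ≠ 0 := Nat.cast_ne_zero.mpr (Nat.factorial_ne_zero m)
  subst hcc
  rw [div_pow]
  field_simp
  ring

end PhiXiAux

/-- **Lemma (Integrable fundamental solution of `L_ξ`).** For each nonzero `ξ ∈ ℝⁿ` and
integer `p ≥ 2`, the function `φ_ξ` is integrable on `ℝ` and its Fourier transform
satisfies `∫ e^{-itu} φ_ξ(t) dt = (-1)^p / (u² + |ξ|²)^p` for all `u ∈ ℝ`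
(i.e. `φ_ξ` is the integrable fundamental solution of `L_ξ = (d²/dt² - |ξ|²)^p`). -/
theorem phiXi_integrable_and_fourierTransform
    (n p : ℕ) (hp : 2 ≤ p)
    (ξ : EuclideanSpace ℝ (Fin n)) (hξ : ξ ≠ 0) :
    Integrable (phiXi p ‖ξ‖) volume ∧
    ∀ u : ℝ, ∫ t : ℝ, Complex.exp (-(Complex.I * t * u)) * phiXi p ‖ξ‖ t
      = (-1 : ℂ) ^ p / ((u : ℂ) ^ 2 + ((‖ξ‖ : ℝ) : ℂ) ^ 2) ^ p := by

  obtain ⟨q, rfl⟩ : ∃ q, p = q + 1 := ⟨p - 1, by omega⟩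
  set c : ℝ := ‖ξ‖ with hcdef
  have hc : 0 < c := by
    rw [hcdef]
    exact norm_pos_iff.mpr hξ
  have hc' : c ≠ 0 := ne_of_gt hc
  set K : ℝ := (-1 : ℝ) ^ (q+1) / (gammaP (q+1) * c ^ (2*(q+1) - 1)) with hK
  have hrep : ∀ t : ℝ, phiXi (q+1) c t
      = ∑ l ∈ Finset.range (q+1), ((K * cCoef (q+1) l * c ^ l : ℝ) : ℂ)
          * ((Real.exp (-(c * |t|)) * |t| ^ l : ℝ) : ℂ) := by
    intro t
    have hr : K * phiTilde (q+1) c t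
        = ∑ l ∈ Finset.range (q+1), (K * cCoef (q+1) l * c ^ l) *
            (Real.exp (-(c * |t|)) * |t| ^ l) := by
      rw [phiTilde, Finset.mul_sum, Finset.mul_sum]
      apply Finset.sum_congr rfl
      intro l _
      ring
    rw [phiXi, ← hK, hr]
    push_cast
    rfl
  constructor
  · have : phiXi (q+1) c = fun t => ∑ l ∈ Finset.range (q+1),
        ((K * cCoef (q+1) l * c ^ l : ℝ) : ℂ) * ((Real.exp (-(c * |t|)) * |t| ^ l : ℝ) : ℂ) :=
      funext hrep
    rw [this]
    apply integrable_finset_sum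
    intro l _
    exact ((integrable_exp_abs_pow c hc l).ofReal).const_mul _
  · intro u
    have hsplit : (fun t : ℝ => Complex.exp (-(Complex.I * t * u)) * phiXi (q+1) c t)
        = fun t : ℝ => ∑ l ∈ Finset.range (q+1), ((K * cCoef (q+1) l * c ^ l : ℝ) : ℂ) *
            (Complex.exp (-(Complex.I * t * u)) * ((Real.exp (-(c * |t|)) * |t| ^ l : ℝ) : ℂ)) := by
      funext t
      rw [hrep t, Finset.mul_sum]
      apply Finset.sum_congr rfl
      intro l _
      ring
    rw [hsplit, integral_finset_sum _ (fun l _ => ((integrable_kernel c hc u l).const_mul _))]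
    simp_rw [integral_const_mul, integral_kernel c hc u]
    -- now the algebra
    set a : ℂ := (c:ℂ) + u * Complex.I with hadef
    set b : ℂ := (c:ℂ) - u * Complex.I with hbdef
    have hare : a.re = c := by simp [hadef]
    have hbre : b.re = c := by simp [hbdef]
    have ha : a ≠ 0 := fun h => by rw [h] at hare; simp at hare; exact hc.ne' hare.symm
    have hb : b ≠ 0 := fun h => by rw [h] at hbre; simp at hbre; exact hc.ne' hbre.symm
    have hsum : a + b = 2 * (c:ℂ) := by rw [hadef, hbdef]; ring
    have hab : a * b = (u:ℂ)^2 + (c:ℂ)^2 := by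
      rw [hadef, hbdef]
      linear_combination (-(u:ℂ)^2) * Complex.I_sq
    have habne : a * b ≠ 0 := mul_ne_zero ha hb
    have hterm : ∀ l ∈ Finset.range (q+1),
        ((K * cCoef (q+1) l * c ^ l : ℝ) : ℂ) *
          ((l.factorial : ℂ) * (1 / b ^ (l+1) + 1 / a ^ (l+1)))
        = (K : ℂ) * ((((2*q - l).factorial : ℂ) / (((q-l)).factorial : ℂ)) * (a+b)^l *
            (a^(q+1) * b^(q-l) + b^(q+1) * a^(q-l)) / (a*b)^(q+1)) := by
      intro l hl
      rw [Finset.mem_range] at hl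
      obtain ⟨m, hm⟩ : ∃ m, q = l + m := ⟨q - l, by omega⟩
      subst hm
      have e1 : 2*(l+m) - l = l + 2*m := by omega
      have e2 : l + m - l = m := by omega
      have hcoef : cCoef (l+m+1) l = ((l + 2*m).factorial : ℝ) * 2^l /
          ((l.factorial : ℝ) * (m.factorial : ℝ)) := by
        rw [cCoef, show 2*(l+m+1) - 2 - l = l + 2*m by omega, show l+m+1-1-l = m by omega]
      rw [e1, e2, hcoef]
      have hLHS : ((K * (((l + 2*m).factorial : ℝ) * 2^l / ((l.factorial : ℝ) * (m.factorial : ℝ)))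
            * c ^ l : ℝ) : ℂ) * ((l.factorial : ℂ) * (1 / b ^ (l+1) + 1 / a ^ (l+1)))
          = (K:ℂ) * ((((((l + 2*m).factorial : ℂ)) * 2^l / ((l.factorial : ℂ) * (m.factorial : ℂ)))
            * ((c:ℝ):ℂ)^l) * ((l.factorial : ℂ) * (1 / b ^ (l+1) + 1 / a ^ (l+1)))) := by
        push_cast
        ring
      rw [hLHS, per_term l m a b ((c:ℝ):ℂ) ha hb hsum]
    rw [Finset.sum_congr rfl hterm, ← Finset.mul_sum]
    have hsumdiv : ∑ l ∈ Finset.range (q+1),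
        ((((2*q - l).factorial : ℂ) / (((q-l)).factorial : ℂ)) * (a+b)^l *
          (a^(q+1) * b^(q-l) + b^(q+1) * a^(q-l)) / (a*b)^(q+1))
        = (q.factorial : ℂ) * (a+b)^(2*q+1) / (a*b)^(q+1) := by
      rw [← Finset.sum_div, main_algebra q a b]
    rw [hsumdiv, hsum]
    have hgamma : (gammaP (q+1) : ℝ) = (q.factorial : ℝ) * 2 ^ (2*q+1) := by
      rw [gammaP, show (q+1) - 1 = q by omega, show 2*(q+1) - 1 = 2*q+1 by omega]
    have hq : ((q.factorial : ℂ)) ≠ 0 := Nat.cast_ne_zero.mpr (Nat.factorial_ne_zero q)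
    rw [hK, hgamma, ← hab]
    have hcpow : ((c:ℂ)) ≠ 0 := Complex.ofReal_ne_zero.mpr hc'
    push_cast
    rw [show 2*(q+1) - 1 = 2*q+1 by omega]
    field_simp
    ring
end
end

section
/- For every nonzero ξ ∈ ℝ^n and every j ∈ {0, ..., N}, the function L_{ξ,j}(t) = Σ_{k=0}^{N} a_{jk} φ̃_ξ(t − t_k), whose coefficients {a_{jk}} are the unique solution of the linear system L_{ξ,j}(t_j) = 1 and L_{ξ,j}(t_k) = 0 for k ≠ j (the system matrix being the positive definite matrix M_ξ = (φ̃_ξ(t_j − t_k))_{j,k}), is a natural L_ξ-spline on τ; consequently it is the Lagrange function for natural L_ξ-spline interpolation at the knot t_j. -/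
open MeasureTheory Finset

noncomputable section

open scoped ContDiff

open Polynomial in
/-- Exponential-polynomial building block `t ↦ e^{bt} P(t)`. -/
def Ef (b : ℂ) (P : ℂ[X]) : ℝ → ℂ := fun t => Complex.exp (b * t) * P.eval (t : ℂ)

open Polynomial

lemma hasDerivAt_Ef (b : ℂ) (P : ℂ[X]) (t : ℝ) :
    HasDerivAt (Ef b P) (Ef b (b • P + P.derivative) t) t := by
  have h0 : HasDerivAt (fun y : ℂ => b * y) b ((t : ℝ) : ℂ) := by
    simpa using (hasDerivAt_id ((t : ℝ) : ℂ)).const_mul b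
  have h1 : HasDerivAt (fun t : ℝ => Complex.exp (b * t)) (Complex.exp (b * t) * b) t :=
    h0.cexp.comp_ofReal
  have h2 : HasDerivAt (fun t : ℝ => P.eval (t : ℂ)) (P.derivative.eval (t : ℂ)) t :=
    (P.hasDerivAt ((t : ℝ) : ℂ)).comp_ofReal
  have : HasDerivAt (Ef b P) _ t := h1.fun_mul h2
  convert this using 1
  simp [Ef]
  ring

lemma deriv_Ef (b : ℂ) (P : ℂ[X]) : deriv (Ef b P) = Ef b (b • P + P.derivative) :=
  funext fun t => (hasDerivAt_Ef b P t).deriv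

lemma Ef_sum {ι : Type*} (b : ℂ) (s : Finset ι) (F : ι → ℂ[X]) (t : ℝ) :
    Ef b (∑ k ∈ s, F k) t = ∑ k ∈ s, Ef b (F k) t := by
  simp [Ef, Polynomial.eval_finset_sum, Finset.mul_sum]

lemma Ef_C_mul (b : ℂ) (a : ℂ) (P : ℂ[X]) (t : ℝ) : Ef b (C a * P) t = a * Ef b P t := by
  simp [Ef]; ring

lemma DOp_Ef (d : ℝ) (b : ℂ) (P : ℂ[X]) :
    DOp d (Ef b P) = Ef b ((b - (d : ℂ)) • P + P.derivative) := by
  funext t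
  simp only [DOp, deriv_Ef, Ef]
  simp [Polynomial.eval_smul, smul_eq_mul]
  ring

/-- The reduced operator on polynomials corresponding to `LOp c` on `Ef b` with `b² = c²`. -/
def Bop (b : ℂ) (P : ℂ[X]) : ℂ[X] := (2 * b) • P.derivative + P.derivative.derivative

lemma LOp_pair (c : ℝ) (P Q : ℂ[X]) :
    LOp c (fun t => Ef c P t + Ef (-c) Q t)
      = fun t => Ef c (Bop c P) t + Ef (-c) (Bop (-c) Q) t := by
  have hd : ∀ (b : ℂ) (R : ℂ[X]) (t : ℝ), DifferentiableAt ℝ (Ef b R) t :=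
    fun b R t => (hasDerivAt_Ef b R t).differentiableAt
  have d1 : deriv (fun t => Ef c P t + Ef (-c) Q t)
      = fun t => Ef c (((c : ℂ)) • P + P.derivative) t
          + Ef (-c) ((-(c : ℂ)) • Q + Q.derivative) t := by
    funext t
    rw [deriv_fun_add (hd _ _ t) (hd _ _ t), deriv_Ef, deriv_Ef]
  funext t
  simp only [LOp]
  rw [show (2 : ℕ) = 1 + 1 from rfl, iteratedDeriv_succ, iteratedDeriv_one, d1]
  rw [deriv_fun_add (hd _ _ t) (hd _ _ t), deriv_Ef, deriv_Ef]
  simp only [Ef, Bop]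
  simp [Polynomial.eval_smul, smul_eq_mul]
  ring

lemma Bop_zero (b : ℂ) : Bop b 0 = 0 := by simp [Bop]

lemma natDegree_Bop_le (b : ℂ) (P : ℂ[X]) : (Bop b P).natDegree ≤ P.natDegree - 1 := by
  refine (Polynomial.natDegree_add_le _ _).trans (max_le ?_ ?_)
  · exact (Polynomial.natDegree_smul_le _ _).trans (Polynomial.natDegree_derivative_le P)
  · have h1 := Polynomial.natDegree_derivative_le P.derivative
    have h2 := Polynomial.natDegree_derivative_le P
    omega

lemma Bop_iterate_zero (b : ℂ) : ∀ (n : ℕ) (P : ℂ[X]), P.natDegree < n → (Bop b)^[n] P = 0 := by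
  intro n
  induction n with
  | zero => intro P h; omega
  | succ m ih =>
    intro P h
    rw [Function.iterate_succ_apply]
    rcases Nat.eq_zero_or_pos P.natDegree with h0 | h0
    · obtain ⟨a, rfl⟩ := Polynomial.natDegree_eq_zero.mp h0
      rw [show Bop b (Polynomial.C a) = 0 by simp [Bop]]
      exact Function.iterate_fixed (Bop_zero b) m
    · exact ih _ (by have := natDegree_Bop_le b P; omega)

lemma LIter_pair (c : ℝ) (p : ℕ) (P Q : ℂ[X]) :
    LIter c p (fun t => Ef c P t + Ef (-c) Q t)
      = fun t => Ef c ((Bop c)^[p] P) t + Ef (-c) ((Bop (-c))^[p] Q) t := by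
  induction p generalizing P Q with
  | zero => simp [LIter]
  | succ m ih =>
    rw [LIter, Function.iterate_succ_apply, ← LIter, LOp_pair, ih,
      Function.iterate_succ_apply, Function.iterate_succ_apply]

lemma LIter_pair_eq_zero (c : ℝ) (p : ℕ) (P Q : ℂ[X])
    (hP : P.natDegree < p) (hQ : Q.natDegree < p) (t : ℝ) :
    LIter c p (fun t => Ef c P t + Ef (-c) Q t) t = 0 := by
  rw [LIter_pair, Bop_iterate_zero _ _ _ hP, Bop_iterate_zero _ _ _ hQ]
  simp [Ef]

lemma DIter_Ef_pos (c : ℝ) (p : ℕ) (P : ℂ[X]) :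
    DIter c p (Ef c P) = Ef c (Polynomial.derivative^[p] P) := by
  induction p generalizing P with
  | zero => simp [DIter]
  | succ m ih =>
    rw [DIter, Function.iterate_succ_apply, ← DIter, DOp_Ef, ih, Function.iterate_succ_apply]
    simp

lemma DIter_Ef_neg (c : ℝ) (p : ℕ) (P : ℂ[X]) :
    DIter (-c) p (Ef (-c) P) = Ef (-c) (Polynomial.derivative^[p] P) := by
  induction p generalizing P with
  | zero => simp [DIter]
  | succ m ih =>
    rw [DIter, Function.iterate_succ_apply, ← DIter, DOp_Ef, ih, Function.iterate_succ_apply]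
    push_cast
    simp

lemma DIter_Ef_pos_zero (c : ℝ) (p : ℕ) (P : ℂ[X]) (hP : P.natDegree < p) (t : ℝ) :
    DIter c p (Ef c P) t = 0 := by
  rw [DIter_Ef_pos, Polynomial.iterate_derivative_eq_zero hP]
  simp [Ef]

lemma DIter_Ef_neg_zero (c : ℝ) (p : ℕ) (P : ℂ[X]) (hP : P.natDegree < p) (t : ℝ) :
    DIter (-c) p (Ef (-c) P) t = 0 := by
  rw [DIter_Ef_neg, Polynomial.iterate_derivative_eq_zero hP]
  simp [Ef]

lemma EventuallyEq.DOpC {f g : ℝ → ℂ} {x : ℝ} (c : ℝ) (h : f =ᶠ[nhds x] g) :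
    DOp c f =ᶠ[nhds x] DOp c g := by
  filter_upwards [h.deriv, h] with t h1 h2
  simp [DOp, h1, h2]

lemma EventuallyEq.DIterC {f g : ℝ → ℂ} {x : ℝ} (c : ℝ) (k : ℕ) (h : f =ᶠ[nhds x] g) :
    DIter c k f =ᶠ[nhds x] DIter c k g := by
  induction k generalizing f g with
  | zero => exact h
  | succ m ih =>
    rw [DIter, DIter, Function.iterate_succ_apply, Function.iterate_succ_apply]
    exact ih (EventuallyEq.DOpC c h)

lemma EventuallyEq.LOpC {f g : ℝ → ℂ} {x : ℝ} (c : ℝ) (h : f =ᶠ[nhds x] g) :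
    LOp c f =ᶠ[nhds x] LOp c g := by
  filter_upwards [h.deriv.deriv, h] with t h1 h2
  simp only [LOp, show (2 : ℕ) = 1 + 1 from rfl, iteratedDeriv_succ, iteratedDeriv_one,
    iteratedDeriv_zero, h1, h2]

lemma EventuallyEq.LIterC {f g : ℝ → ℂ} {x : ℝ} (c : ℝ) (k : ℕ) (h : f =ᶠ[nhds x] g) :
    LIter c k f =ᶠ[nhds x] LIter c k g := by
  induction k generalizing f g with
  | zero => exact h
  | succ m ih =>
    rw [LIter, LIter, Function.iterate_succ_apply, Function.iterate_succ_apply]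
    exact ih (EventuallyEq.LOpC c h)

/-! ### Combinatorial identities for the coefficients -/

lemma fact_cast_ne (k : ℕ) : ((k.factorial : ℝ)) ≠ 0 := by
  exact_mod_cast k.factorial_pos.ne'

lemma cCoef_main (m a : ℕ) :
    (m + 2 : ℝ) * cCoef (m + a + 3) (m + 2) - cCoef (m + a + 3) (m + 1)
      = -2 * cCoef (m + a + 2) m := by
  simp only [cCoef]
  rw [show 2 * (m + a + 3) - 2 - (m + 2) = (m + 2 * a + 2) from by omega,
    show 2 * (m + a + 3) - 2 - (m + 1) = (m + 2 * a + 2) + 1 from by omega,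
    show 2 * (m + a + 2) - 2 - m = (m + 2 * a + 2) from by omega,
    show m + a + 3 - 1 - (m + 2) = a from by omega,
    show m + a + 3 - 1 - (m + 1) = a + 1 from by omega,
    show m + a + 2 - 1 - m = a + 1 from by omega,
    show m + 2 = (m + 1) + 1 from rfl]
  rw [Nat.factorial_succ ((m + 2 * a + 2)), Nat.factorial_succ (m + 1), Nat.factorial_succ m,
    Nat.factorial_succ a]
  push_cast
  have h1 := fact_cast_ne m
  have h2 := fact_cast_ne a
  have h3 := fact_cast_ne (m + 2 * a + 2)
  field_simp
  ring

lemma cCoef_zero_one (q : ℕ) : cCoef (q + 2) 1 = cCoef (q + 2) 0 := by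
  simp only [cCoef]
  rw [show 2 * (q + 2) - 2 - 1 = 2 * q + 1 from by omega,
    show 2 * (q + 2) - 2 - 0 = (2 * q + 1) + 1 from by omega,
    show q + 2 - 1 - 1 = q from by omega,
    show q + 2 - 1 - 0 = q + 1 from by omega]
  rw [Nat.factorial_succ (2 * q + 1), Nat.factorial_succ q]
  push_cast
  have h1 := fact_cast_ne q
  have h2 := fact_cast_ne (2 * q + 1)
  field_simp
  ring

lemma cCoef_top (m : ℕ) : cCoef (m + 2) (m + 1) = 2 * cCoef (m + 1) m := by
  simp only [cCoef]
  rw [show 2 * (m + 2) - 2 - (m + 1) = m + 1 from by omega,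
    show 2 * (m + 1) - 2 - m = m from by omega,
    show m + 2 - 1 - (m + 1) = 0 from by omega,
    show m + 1 - 1 - m = 0 from by omega,
    Nat.factorial_succ m]
  push_cast
  have h1 := fact_cast_ne m
  field_simp
  ring

/-- The polynomial `Σ_{l<p} c_l X^l` over `ℝ`. -/
def QPr (p : ℕ) : Polynomial ℝ := ∑ l ∈ Finset.range p, C (cCoef p l) * X ^ l

lemma coeff_QPr (p m : ℕ) : (QPr p).coeff m = if m < p then cCoef p m else 0 := by
  simp only [QPr, Polynomial.finset_sum_coeff, Polynomial.coeff_C_mul, Polynomial.coeff_X_pow]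
  simp_rw [mul_ite, mul_one, mul_zero]
  rw [Finset.sum_ite_eq (Finset.range p) m (fun l => cCoef p l)]
  simp [Finset.mem_range]

lemma QPr_key (p : ℕ) (hp : 2 ≤ p) :
    Polynomial.derivative (QPr p) - QPr p = -(C 2 * (X * QPr (p - 1))) := by
  ext m
  simp only [Polynomial.coeff_sub, Polynomial.coeff_derivative, Polynomial.coeff_neg,
    Polynomial.coeff_C_mul, coeff_QPr]
  rcases m with _ | m
  · rw [Polynomial.mul_coeff_zero]
    obtain ⟨q, rfl⟩ := Nat.exists_eq_add_of_le hp
    simp only [Polynomial.coeff_X_zero, zero_mul, mul_zero, neg_zero]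
    rw [if_pos (by omega), if_pos (by omega)]
    rw [show 2 + q = q + 2 from by omega] at *
    rw [cCoef_zero_one q]
    ring
  · rw [Polynomial.coeff_X_mul, coeff_QPr]
    by_cases h1 : m + 2 < p
    · rw [if_pos h1, if_pos (by omega), if_pos (by omega)]
      obtain ⟨a, rfl⟩ : ∃ a, p = m + a + 3 := ⟨p - m - 3, by omega⟩
      rw [show m + a + 3 - 1 = m + a + 2 from by omega]
      push_cast
      nlinarith [cCoef_main m a]
    · by_cases h2 : m + 1 < p
      · have hpm : p = m + 2 := by omega
        subst hpm
        rw [if_neg (by omega), if_pos (by omega), if_pos (by omega)]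
        rw [show m + 2 - 1 = m + 1 from by omega]
        rw [cCoef_top m]
        ring
      · rw [if_neg (by omega), if_neg (by omega), if_neg (by omega)]
        ring

/-! ### The one-sided profile `G_p(u) = e^{-u} Σ_l c_l u^l` -/

def Gfun (p : ℕ) : ℝ → ℝ := fun u => Real.exp (-u) * (QPr p).eval u

lemma contDiff_polyeval (P : Polynomial ℝ) : ContDiff ℝ ∞ fun x : ℝ => P.eval x := by
  induction P using Polynomial.induction_on' with
  | add p q hp hq => simpa [Polynomial.eval_add] using hp.add hq
  | monomial n a =>
    simpa [Polynomial.eval_monomial] using (contDiff_const (c := a)).mul (contDiff_id.pow n)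

lemma contDiff_id_mul {f : ℝ → ℝ} (hf : ContDiff ℝ ∞ f) :
    ContDiff ℝ ∞ fun t : ℝ => t * f t := contDiff_id.mul hf

lemma contDiff_Gfun (p : ℕ) : ContDiff ℝ ∞ (Gfun p) :=
  ((Real.contDiff_exp.comp contDiff_neg).mul (contDiff_polyeval (QPr p)))

lemma hasDerivAt_Gfun (p : ℕ) (u : ℝ) :
    HasDerivAt (Gfun p) (Real.exp (-u) * ((Polynomial.derivative (QPr p) - QPr p).eval u)) u := by
  have h1 : HasDerivAt (fun u : ℝ => Real.exp (-u)) (-Real.exp (-u)) u := by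
    simpa using ((hasDerivAt_id u).neg.exp)
  have h2 := (QPr p).hasDerivAt u
  have : HasDerivAt (Gfun p) _ u := h1.fun_mul h2
  convert this using 1
  simp [Gfun]
  ring

lemma deriv_Gfun (p : ℕ) (hp : 2 ≤ p) :
    deriv (Gfun p) = fun u => -2 * (u * Gfun (p - 1) u) := by
  funext u
  rw [(hasDerivAt_Gfun p u).deriv, QPr_key p hp]
  simp [Gfun]
  ring

lemma itd_add {f g : ℝ → ℝ} (n : ℕ) (hf : ContDiff ℝ ∞ f) (hg : ContDiff ℝ ∞ g) (x : ℝ) :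
    iteratedDeriv n (fun t => f t + g t) x = iteratedDeriv n f x + iteratedDeriv n g x := by
  have hf' : ContDiffOn ℝ n f Set.univ := (hf.of_le (by exact_mod_cast le_top)).contDiffOn
  have hg' : ContDiffOn ℝ n g Set.univ := (hg.of_le (by exact_mod_cast le_top)).contDiffOn
  simp only [← iteratedDerivWithin_univ]
  exact iteratedDerivWithin_add (Set.mem_univ x) uniqueDiffOn_univ (hf' x (Set.mem_univ x)) (hg' x (Set.mem_univ x))

lemma itd_const_mul {f : ℝ → ℝ} (n : ℕ) (c : ℝ) (hf : ContDiff ℝ ∞ f) (x : ℝ) :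
    iteratedDeriv n (fun t => c * f t) x = c * iteratedDeriv n f x := by
  have hf' : ContDiffOn ℝ n f Set.univ := (hf.of_le (by exact_mod_cast le_top)).contDiffOn
  simp only [← iteratedDerivWithin_univ]
  exact iteratedDerivWithin_const_mul (Set.mem_univ x) uniqueDiffOn_univ c (hf' x (Set.mem_univ x))

lemma itd_mul_id (n : ℕ) : ∀ (f : ℝ → ℝ), ContDiff ℝ ∞ f →
    iteratedDeriv (n + 1) (fun x => x * f x) 0 = (n + 1) * iteratedDeriv n f 0 := by
  induction n with
  | zero =>
    intro f hf
    rw [iteratedDeriv_one]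
    have : HasDerivAt (fun x : ℝ => x * f x) (1 * f 0 + 0 * deriv f 0) 0 :=
      (hasDerivAt_id 0).mul (hf.differentiable (by simp) 0).hasDerivAt
    rw [this.deriv]
    simp
  | succ m ih =>
    intro f hf
    have hdf : ContDiff ℝ ∞ (deriv f) := (contDiff_infty_iff_deriv.mp hf).2
    have hder : deriv (fun x => x * f x) = fun x => f x + x * deriv f x := by
      funext x
      exact ((hasDerivAt_id x).mul
        (hf.differentiable (by simp) x).hasDerivAt).deriv.trans
        (by simp [id_eq]; try ring)
    rw [iteratedDeriv_succ', hder, itd_add (m + 1) hf (contDiff_id_mul hdf),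
      ih (deriv f) hdf, ← iteratedDeriv_succ']
    push_cast
    ring

lemma Gfun_odd_deriv_zero : ∀ (k p : ℕ), 2 ≤ p → Odd k → k ≤ 2 * p - 3 →
    iteratedDeriv k (Gfun p) 0 = 0 := by
  intro k
  induction k using Nat.strong_induction_on with
  | _ k ih =>
    intro p hp hodd hk
    obtain ⟨m, rfl⟩ := hodd
    rw [show 2 * m + 1 = m + m + 1 from by ring] at *
    rw [iteratedDeriv_succ', deriv_Gfun p hp]
    have hG : ContDiff ℝ ∞ (Gfun (p - 1)) := contDiff_Gfun _
    rw [itd_const_mul (m + m) (-2) (contDiff_id_mul hG) 0]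
    rcases Nat.eq_zero_or_pos m with rfl | hm
    · simp
    · obtain ⟨m', rfl⟩ := Nat.exists_eq_add_of_le hm
      rw [show 1 + m' + (1 + m') = (m' + m' + 1) + 1 from by ring]
      rw [itd_mul_id _ _ hG]
      rw [ih (m' + m' + 1) (by omega) (p - 1) (by omega) ⟨m', by ring⟩ (by omega)]
      ring

/-! ### Gluing lemma and smoothness of `phiTilde` -/

lemma glue_contDiff : ∀ (n : ℕ) (f g h : ℝ → ℝ), ContDiff ℝ ∞ f → ContDiff ℝ ∞ g →
    (∀ t, 0 ≤ t → h t = f t) → (∀ t, t ≤ 0 → h t = g t) →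
    (∀ k, k ≤ n → iteratedDeriv k f 0 = iteratedDeriv k g 0) →
    ContDiff ℝ (n : ℕ) h := by
  intro n
  induction n with
  | zero =>
    intro f g h hf hg hhf hhg heq
    rw [Nat.cast_zero, contDiff_zero]
    have : h = fun t => if 0 ≤ t then f t else g t := by
      funext t
      rcases le_or_gt 0 t with ht | ht
      · rw [if_pos ht, hhf t ht]
      · rw [if_neg (not_le.mpr ht), hhg t ht.le]
    rw [this]
    refine Continuous.if_le (hf.continuous) (hg.continuous) continuous_const continuous_id ?_
    intro x hx
    have h0 := heq 0 le_rfl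
    simp only [iteratedDeriv_zero] at h0
    rw [← hx] at *
    rw [← h0]
  | succ n ih =>
    intro f g h hf hg hhf hhg heq
    have hdf0 : deriv g 0 = deriv f 0 := by
      have := heq 1 (by omega); simpa [iteratedDeriv_one] using this.symm
    have hdAt : ∀ t : ℝ, HasDerivAt h (if 0 ≤ t then deriv f t else deriv g t) t := by
      intro t
      rcases lt_trichotomy t 0 with ht | rfl | ht
      · rw [if_neg (not_le.mpr ht)]
        have hev : h =ᶠ[nhds t] g :=
          Filter.eventuallyEq_of_mem (Iio_mem_nhds ht) (fun y hy => hhg y (le_of_lt hy))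
        exact ((hg.differentiable (by simp) t).hasDerivAt).congr_of_eventuallyEq
          hev
      · rw [if_pos le_rfl]
        have h1 : HasDerivWithinAt h (deriv f 0) (Set.Ici 0) 0 := by
          refine ((hf.differentiable (by simp)
            0).hasDerivAt.hasDerivWithinAt).congr ?_ (hhf 0 le_rfl)
          intro y hy; exact hhf y hy
        have h2 : HasDerivWithinAt h (deriv f 0) (Set.Iic 0) 0 := by
          rw [← hdf0]
          refine ((hg.differentiable (by simp)
            0).hasDerivAt.hasDerivWithinAt).congr ?_ (hhg 0 le_rfl)
          intro y hy; exact hhg y hy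
        have := h2.union h1
        rw [Set.Iic_union_Ici] at this
        exact hasDerivWithinAt_univ.mp this
      · rw [if_pos ht.le]
        have hev : h =ᶠ[nhds t] f :=
          Filter.eventuallyEq_of_mem (Ioi_mem_nhds ht) (fun y hy => hhf y (le_of_lt hy))
        exact ((hf.differentiable (by simp) t).hasDerivAt).congr_of_eventuallyEq
          hev
    have hdiff : Differentiable ℝ h := fun t => (hdAt t).differentiableAt
    have hderiv : deriv h = fun t => if 0 ≤ t then deriv f t else deriv g t :=
      funext fun t => (hdAt t).deriv
    have hdf : ContDiff ℝ ∞ (deriv f) := (contDiff_infty_iff_deriv.mp hf).2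
    have hdg : ContDiff ℝ ∞ (deriv g) := (contDiff_infty_iff_deriv.mp hg).2
    have hcd : ContDiff ℝ (n : ℕ) (deriv h) := by
      rw [hderiv]
      refine ih (deriv f) (deriv g) _ hdf hdg (fun t ht => if_pos ht) ?_ ?_
      · intro t ht
        rcases eq_or_lt_of_le ht with rfl | ht'
        · rw [if_pos le_rfl, hdf0]
        · rw [if_neg (not_le.mpr ht')]
      · intro k hk
        rw [← iteratedDeriv_succ', ← iteratedDeriv_succ']
        exact heq (k + 1) (by omega)
    rw [show ((n + 1 : ℕ) : WithTop ℕ∞) = (n : ℕ) + 1 from by push_cast; rfl]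
    exact contDiff_succ_iff_deriv.mpr ⟨hdiff, by simp, hcd⟩

lemma phiTilde_eq_Gfun (p : ℕ) (c t : ℝ) : phiTilde p c t = Gfun p (c * |t|) := by
  simp only [phiTilde, Gfun, QPr, Polynomial.eval_finset_sum, Polynomial.eval_mul,
    Polynomial.eval_pow, Polynomial.eval_C, Polynomial.eval_X, mul_pow]
  congr 1
  exact Finset.sum_congr rfl (fun l _ => by ring)

lemma contDiff_phiTilde (p : ℕ) (hp : 2 ≤ p) (c : ℝ) :
    ContDiff ℝ ((2 * p - 2 : ℕ) : ℕ) (phiTilde p c) := by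
  have hG : ∀ d : ℝ, ContDiff ℝ ∞ (fun t : ℝ => Gfun p (d * t)) :=
    fun d => (contDiff_Gfun p).comp (contDiff_const.mul contDiff_id)
  refine glue_contDiff (2 * p - 2) (fun t => Gfun p (c * t)) (fun t => Gfun p (-c * t))
    (phiTilde p c) (hG c) (hG (-c)) ?_ ?_ ?_
  · intro t ht
    rw [phiTilde_eq_Gfun, abs_of_nonneg ht]
  · intro t ht
    rw [phiTilde_eq_Gfun, abs_of_nonpos ht]
    ring_nf
  · intro k hk
    have hck : ∀ d : ℝ, iteratedDeriv k (fun t : ℝ => Gfun p (d * t)) 0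
        = d ^ k * iteratedDeriv k (Gfun p) 0 := by
      intro d
      have := iteratedDeriv_comp_const_mul ((contDiff_Gfun p).of_le (by exact_mod_cast le_top)) d
        (f := Gfun p) (n := k)
      rw [congrFun this 0, mul_zero]
    rw [hck c, hck (-c)]
    rcases Nat.even_or_odd k with he | ho
    · rw [he.neg_pow]
    · obtain ⟨m, hm⟩ := ho
      rw [Gfun_odd_deriv_zero k p hp ⟨m, hm⟩ (by omega)]
      ring

/-! ### Piecewise exponential-polynomial representations of `phiTilde` -/

def Pplus (p : ℕ) (c τ : ℝ) : ℂ[X] :=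
  C ((Real.exp (c * τ) : ℝ) : ℂ) *
    ∑ l ∈ Finset.range p, C ((cCoef p l * c ^ l : ℝ) : ℂ) * (X - C (τ : ℂ)) ^ l

def Pminus (p : ℕ) (c τ : ℝ) : ℂ[X] :=
  C ((Real.exp (-(c * τ)) : ℝ) : ℂ) *
    ∑ l ∈ Finset.range p, C ((cCoef p l * (-c) ^ l : ℝ) : ℂ) * (X - C (τ : ℂ)) ^ l

lemma natDegree_Pplus_le (p : ℕ) (c τ : ℝ) : (Pplus p c τ).natDegree ≤ p - 1 := by
  refine (Polynomial.natDegree_C_mul_le _ _).trans ?_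
  refine Polynomial.natDegree_sum_le_of_forall_le _ _ (fun l hl => ?_)
  refine (Polynomial.natDegree_C_mul_le _ _).trans ?_
  refine Polynomial.natDegree_pow_le.trans ?_
  rw [Polynomial.natDegree_X_sub_C]
  simp only [Finset.mem_range] at hl
  omega

lemma natDegree_Pminus_le (p : ℕ) (c τ : ℝ) : (Pminus p c τ).natDegree ≤ p - 1 := by
  refine (Polynomial.natDegree_C_mul_le _ _).trans ?_
  refine Polynomial.natDegree_sum_le_of_forall_le _ _ (fun l hl => ?_)
  refine (Polynomial.natDegree_C_mul_le _ _).trans ?_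
  refine Polynomial.natDegree_pow_le.trans ?_
  rw [Polynomial.natDegree_X_sub_C]
  simp only [Finset.mem_range] at hl
  omega

lemma phiTilde_eq_Ef_pos (p : ℕ) (c τ t : ℝ) (h : τ ≤ t) :
    ((phiTilde p c (t - τ) : ℝ) : ℂ) = Ef (-(c : ℂ)) (Pplus p c τ) t := by
  simp only [phiTilde, Ef, Pplus, Polynomial.eval_mul, Polynomial.eval_C,
    Polynomial.eval_finset_sum, Polynomial.eval_pow, Polynomial.eval_sub, Polynomial.eval_X,
    abs_of_nonneg (sub_nonneg.mpr h)]
  push_cast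
  rw [← mul_assoc, ← Complex.exp_add,
    show -(c : ℂ) * t + (c : ℂ) * τ = -((c : ℂ) * ((t : ℂ) - (τ : ℂ))) from by ring]

lemma phiTilde_eq_Ef_neg (p : ℕ) (c τ t : ℝ) (h : t ≤ τ) :
    ((phiTilde p c (t - τ) : ℝ) : ℂ) = Ef ((c : ℂ)) (Pminus p c τ) t := by
  simp only [phiTilde, Ef, Pminus, Polynomial.eval_mul, Polynomial.eval_C,
    Polynomial.eval_finset_sum, Polynomial.eval_pow, Polynomial.eval_sub, Polynomial.eval_X,
    abs_of_nonpos (sub_nonpos.mpr h)]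
  push_cast
  rw [← mul_assoc, ← Complex.exp_add,
    show (c : ℂ) * t + -((c : ℂ) * τ) = -((c : ℂ) * (-((t : ℂ) - (τ : ℂ)))) from by ring]
  congr 1
  refine Finset.sum_congr rfl (fun l _ => ?_)
  rw [neg_pow ((t : ℂ) - (τ : ℂ)), neg_pow (c : ℂ)]
  ring

/-- **Lemma (RBF representation of the Lagrange functions).** For every nonzero `ξ ∈ ℝⁿ`
and every `j ∈ {0, ..., N}`, if the coefficients `a k` solve the interpolation system
`Σ_k a k φ̃_ξ(τ j' - τ k) = δ_{j j'}`, then the function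
`t ↦ Σ_k a k φ̃_ξ(t - τ k)` is a natural `L_ξ`-spline on `τ`; consequently it is the
Lagrange function for natural `L_ξ`-spline interpolation at the knot `τ j` (it takes the
value `1` at `τ j` and `0` at the other knots). -/
theorem rbf_representation_is_lagrange_function
    (n p N : ℕ) (hp : 2 ≤ p) (hN : p ≤ N + 1)
    (ξ : EuclideanSpace ℝ (Fin n)) (hξ : ξ ≠ 0)
    (τ : Fin (N + 1) → ℝ) (hτ : StrictMono τ)
    (j : Fin (N + 1)) (a : Fin (N + 1) → ℝ)
    (ha : ∀ k, ∑ l : Fin (N + 1), a l * phiTilde p ‖ξ‖ (τ k - τ l) = if k = j then 1 else 0) :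
    IsNaturalLSpline p N ‖ξ‖ τ
      (fun t => ((∑ k : Fin (N + 1), a k * phiTilde p ‖ξ‖ (t - τ k) : ℝ) : ℂ)) ∧
    ∀ k, ((∑ l : Fin (N + 1), a l * phiTilde p ‖ξ‖ (τ k - τ l) : ℝ) : ℂ)
      = if k = j then 1 else 0 := by
  have hval : ∀ k, ((∑ l : Fin (N + 1), a l * phiTilde p ‖ξ‖ (τ k - τ l) : ℝ) : ℂ)
      = if k = j then 1 else 0 := by
    intro k
    rw [ha k]
    split <;> norm_num
  -- polynomials for the three kinds of regions
  set c : ℝ := ‖ξ‖ with hcdef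
  have hPLdeg : (∑ k : Fin (N + 1), C ((a k : ℝ) : ℂ) * Pminus p c (τ k)).natDegree < p := by
    have h1 : (∑ k : Fin (N + 1), C ((a k : ℝ) : ℂ) * Pminus p c (τ k)).natDegree ≤ p - 1 :=
      Polynomial.natDegree_sum_le_of_forall_le _ _ (fun k _ =>
        (Polynomial.natDegree_C_mul_le _ _).trans (natDegree_Pminus_le p c (τ k)))
    omega
  have hPRdeg : (∑ k : Fin (N + 1), C ((a k : ℝ) : ℂ) * Pplus p c (τ k)).natDegree < p := by
    have h1 : (∑ k : Fin (N + 1), C ((a k : ℝ) : ℂ) * Pplus p c (τ k)).natDegree ≤ p - 1 :=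
      Polynomial.natDegree_sum_le_of_forall_le _ _ (fun k _ =>
        (Polynomial.natDegree_C_mul_le _ _).trans (natDegree_Pplus_le p c (τ k)))
    omega
  -- eventual-equality on the left region
  have hrepL : ∀ x ∈ Set.Iio (τ 0),
      (fun t => ((∑ k : Fin (N + 1), a k * phiTilde p ‖ξ‖ (t - τ k) : ℝ) : ℂ)) =ᶠ[nhds x]
        Ef (c : ℂ) (∑ k : Fin (N + 1), C ((a k : ℝ) : ℂ) * Pminus p c (τ k)) := by
    intro x hx
    refine Filter.eventuallyEq_of_mem (Iio_mem_nhds hx) (fun t ht => ?_)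
    push_cast
    rw [Ef_sum]
    refine Finset.sum_congr rfl (fun k _ => ?_)
    rw [Ef_C_mul, ← phiTilde_eq_Ef_neg p c (τ k) t
      (le_of_lt (lt_of_lt_of_le ht (hτ.monotone (Fin.zero_le k))))]
  -- eventual-equality on the right region
  have hrepR : ∀ x ∈ Set.Ioi (τ (Fin.last N)),
      (fun t => ((∑ k : Fin (N + 1), a k * phiTilde p ‖ξ‖ (t - τ k) : ℝ) : ℂ)) =ᶠ[nhds x]
        Ef (-(c : ℂ)) (∑ k : Fin (N + 1), C ((a k : ℝ) : ℂ) * Pplus p c (τ k)) := by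
    intro x hx
    refine Filter.eventuallyEq_of_mem (Ioi_mem_nhds hx) (fun t ht => ?_)
    push_cast
    rw [Ef_sum]
    refine Finset.sum_congr rfl (fun k _ => ?_)
    rw [Ef_C_mul, ← phiTilde_eq_Ef_pos p c (τ k) t
      (le_of_lt (lt_of_le_of_lt (hτ.monotone (Fin.le_last k)) ht))]
  refine ⟨⟨?_, ?_, ?_, ?_, ?_, ?_⟩, hval⟩
  · -- smoothness
    have hreal : ContDiff ℝ ((2 * p - 2 : ℕ) : ℕ)
        fun t : ℝ => ∑ k : Fin (N + 1), a k * phiTilde p ‖ξ‖ (t - τ k) := by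
      refine ContDiff.sum (fun k _ => ?_)
      exact contDiff_const.mul
        ((contDiff_phiTilde p hp ‖ξ‖).comp (contDiff_id.sub contDiff_const))
    exact Complex.ofRealCLM.contDiff.comp hreal
  · -- interior intervals
    intro j' x hx
    set P1 : Polynomial ℂ := ∑ k ∈ Finset.univ.filter (fun k : Fin (N + 1) => k ≤ j'.castSucc),
      C ((a k : ℝ) : ℂ) * Pplus p c (τ k) with hP1def
    set P2 : Polynomial ℂ := ∑ k ∈ Finset.univ.filter (fun k : Fin (N + 1) => ¬ k ≤ j'.castSucc),
      C ((a k : ℝ) : ℂ) * Pminus p c (τ k) with hP2def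
    have hP1deg : P1.natDegree < p := by
      have h1 : P1.natDegree ≤ p - 1 := Polynomial.natDegree_sum_le_of_forall_le _ _ (fun k _ =>
        (Polynomial.natDegree_C_mul_le _ _).trans (natDegree_Pplus_le p c (τ k)))
      omega
    have hP2deg : P2.natDegree < p := by
      have h1 : P2.natDegree ≤ p - 1 := Polynomial.natDegree_sum_le_of_forall_le _ _ (fun k _ =>
        (Polynomial.natDegree_C_mul_le _ _).trans (natDegree_Pminus_le p c (τ k)))
      omega
    have hev : (fun t => ((∑ k : Fin (N + 1), a k * phiTilde p ‖ξ‖ (t - τ k) : ℝ) : ℂ))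
        =ᶠ[nhds x] fun t => Ef (c : ℂ) P2 t + Ef (-(c : ℂ)) P1 t := by
      refine Filter.eventuallyEq_of_mem (isOpen_Ioo.mem_nhds hx) (fun t ht => ?_)
      push_cast
      rw [← Finset.sum_filter_add_sum_filter_not Finset.univ
        (fun k : Fin (N + 1) => k ≤ j'.castSucc)
        (fun k => ((a k : ℝ) : ℂ) * ((phiTilde p ‖ξ‖ (t - τ k) : ℝ) : ℂ))]
      have hA : ∑ k ∈ Finset.univ.filter (fun k : Fin (N + 1) => k ≤ j'.castSucc),
          ((a k : ℝ) : ℂ) * ((phiTilde p ‖ξ‖ (t - τ k) : ℝ) : ℂ) = Ef (-(c : ℂ)) P1 t := by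
        rw [hP1def, Ef_sum]
        refine Finset.sum_congr rfl (fun k hk => ?_)
        rw [Finset.mem_filter] at hk
        rw [Ef_C_mul, ← phiTilde_eq_Ef_pos p c (τ k) t
          (le_of_lt (lt_of_le_of_lt (hτ.monotone hk.2) ht.1))]
      have hB : ∑ k ∈ Finset.univ.filter (fun k : Fin (N + 1) => ¬ k ≤ j'.castSucc),
          ((a k : ℝ) : ℂ) * ((phiTilde p ‖ξ‖ (t - τ k) : ℝ) : ℂ) = Ef ((c : ℂ)) P2 t := by
        rw [hP2def, Ef_sum]
        refine Finset.sum_congr rfl (fun k hk => ?_)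
        rw [Finset.mem_filter] at hk
        have hk2 : j'.succ ≤ k := Fin.castSucc_lt_iff_succ_le.mp (not_le.mp hk.2)
        rw [Ef_C_mul, ← phiTilde_eq_Ef_neg p c (τ k) t
          (le_of_lt (lt_of_lt_of_le ht.2 (hτ.monotone hk2)))]
      rw [hA, hB]
      ring
    rw [(EventuallyEq.LIterC c p hev).eq_of_nhds]
    exact LIter_pair_eq_zero c p P2 P1 hP2deg hP1deg x
  · -- LIter on the left region
    intro x hx
    have hev := hrepL x hx
    have heq2 : (fun t => Ef (c : ℂ) (∑ k : Fin (N + 1), C ((a k : ℝ) : ℂ) * Pminus p c (τ k)) t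
        + Ef (-(c : ℂ)) 0 t)
        = Ef (c : ℂ) (∑ k : Fin (N + 1), C ((a k : ℝ) : ℂ) * Pminus p c (τ k)) := by
      funext u; simp [Ef]
    have hev2 := hev.trans (Filter.EventuallyEq.of_eq heq2.symm)
    rw [(EventuallyEq.LIterC c p hev2).eq_of_nhds]
    exact LIter_pair_eq_zero c p _ 0 hPLdeg (by simp; omega) x
  · -- LIter on the right region
    intro x hx
    have hev := hrepR x hx
    have heq2 : (fun t => Ef (c : ℂ) (0 : Polynomial ℂ) t
        + Ef (-(c : ℂ)) (∑ k : Fin (N + 1), C ((a k : ℝ) : ℂ) * Pplus p c (τ k)) t)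
        = Ef (-(c : ℂ)) (∑ k : Fin (N + 1), C ((a k : ℝ) : ℂ) * Pplus p c (τ k)) := by
      funext u; simp [Ef]
    have hev2 := hev.trans (Filter.EventuallyEq.of_eq heq2.symm)
    rw [(EventuallyEq.LIterC c p hev2).eq_of_nhds]
    exact LIter_pair_eq_zero c p 0 _ (by simp; omega) hPRdeg x
  · -- DIter on the left region
    intro x hx
    rw [(EventuallyEq.DIterC c p (hrepL x hx)).eq_of_nhds]
    exact DIter_Ef_pos_zero c p _ hPLdeg x
  · -- DIter on the right region
    intro x hx
    rw [(EventuallyEq.DIterC (-c) p (hrepR x hx)).eq_of_nhds]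
    exact DIter_Ef_neg_zero c p _ hPRdeg x
end
end

section
/- There exists a constant μ = μ(p, τ) > 0 such that for every ξ ∈ ℝ^n with |ξ| ≥ μ, every eigenvalue λ of the matrix M_ξ = (φ̃_ξ(t_j − t_k))_{j,k=0}^{N} satisfies λ ≥ c_0 / 2, where c_0 = (2p−2)!/(p−1)!. -/
open MeasureTheory Finset

noncomputable section

lemma cCoef_nonneg (p l : ℕ) : 0 ≤ cCoef p l := by
  unfold cCoef
  positivity

lemma phiTilde_nonneg (p : ℕ) {c : ℝ} (hc : 0 ≤ c) (t : ℝ) : 0 ≤ phiTilde p c t := by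
  unfold phiTilde
  have : 0 ≤ ∑ l ∈ Finset.range p, cCoef p l * c ^ l * |t| ^ l := by
    apply Finset.sum_nonneg
    intro l _
    have := cCoef_nonneg p l
    positivity
  positivity

lemma phiTilde_zero (p : ℕ) (hp : 1 ≤ p) (c : ℝ) : phiTilde p c 0 = cCoef p 0 := by
  unfold phiTilde
  rw [abs_zero, mul_zero, neg_zero, Real.exp_zero, one_mul]
  rw [Finset.sum_eq_single_of_mem 0 (Finset.mem_range.mpr hp)]
  · simp
  · intro l _ hl
    simp [zero_pow hl]

lemma phiTilde_le (p : ℕ) {c t : ℝ} (hx : 0 < c * |t|) (hc : 0 ≤ c) :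
    phiTilde p c t ≤ (∑ l ∈ Finset.range p, cCoef p l * (l + 1).factorial) / (c * |t|) := by
  set x := c * |t| with hxdef
  unfold phiTilde
  rw [Real.exp_neg, inv_mul_eq_div, div_le_div_iff₀ (Real.exp_pos x) hx,
    Finset.sum_mul, Finset.sum_mul]
  apply Finset.sum_le_sum
  intro l _
  have hcl := cCoef_nonneg p l
  have habs : (0:ℝ) ≤ |t| := abs_nonneg t
  have hxnn : (0:ℝ) ≤ x := le_of_lt hx
  have key : x ^ (l + 1) ≤ (l + 1).factorial * Real.exp x := by
    have := Real.pow_div_factorial_le_exp x hxnn (l + 1)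
    have hf : (0:ℝ) < (l + 1).factorial := by positivity
    calc x ^ (l+1) = x ^ (l+1) / (l+1).factorial * (l+1).factorial := by field_simp
    _ ≤ Real.exp x * (l+1).factorial := by
        apply mul_le_mul_of_nonneg_right this (le_of_lt hf)
    _ = (l+1).factorial * Real.exp x := by ring
  calc cCoef p l * c ^ l * |t| ^ l * x
      = cCoef p l * x ^ (l + 1) := by rw [hxdef, mul_pow]; ring
    _ ≤ cCoef p l * ((l + 1).factorial * Real.exp x) :=
        mul_le_mul_of_nonneg_left key hcl
    _ = cCoef p l * (l + 1).factorial * Real.exp x := by ring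

/-- **Lemma (Eigenvalue lower bound for large `|ξ|`).** There is a constant
`μ = μ(p, τ) > 0` such that for every `ξ ∈ ℝⁿ` with `|ξ| ≥ μ`, every eigenvalue `λ` of the
matrix `M_ξ = (φ̃_ξ(τ j - τ k))_{j,k}` satisfies `λ ≥ c₀ / 2`, where
`c₀ = (2p-2)!/(p-1)!`. -/
theorem eigenvalue_lower_bound
    (n p N : ℕ) (hp : 2 ≤ p)
    (τ : Fin (N + 1) → ℝ) (hτ : StrictMono τ) :
    ∃ μ > (0 : ℝ), ∀ ξ : EuclideanSpace ℝ (Fin n), μ ≤ ‖ξ‖ →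
      ∀ (lam : ℝ) (v : Fin (N + 1) → ℝ), v ≠ 0 →
        (Matrix.of fun j k => phiTilde p ‖ξ‖ (τ j - τ k)).mulVec v = lam • v →
        ((2 * p - 2).factorial : ℝ) / ((p - 1).factorial : ℝ) / 2 ≤ lam := by
  have hp1 : 1 ≤ p := le_trans one_le_two hp
  set c0 : ℝ := ((2 * p - 2).factorial : ℝ) / ((p - 1).factorial : ℝ) with hc0
  have hc0pos : 0 < c0 := by positivity
  have hc0eq : cCoef p 0 = c0 := by
    simp [cCoef, hc0]
  set C : ℝ := ∑ l ∈ Finset.range p, cCoef p l * (l + 1).factorial with hC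
  have hCnn : 0 ≤ C := Finset.sum_nonneg fun l _ => by
    have := cCoef_nonneg p l; positivity
  set ε : ℝ := c0 / (2 * (N + 1)) with hε
  have hεpos : 0 < ε := by positivity
  set S : Finset ℝ := insert 1 ((Finset.univ.filter
      (fun q : Fin (N + 1) × Fin (N + 1) => q.1 ≠ q.2)).image
      (fun q => |τ q.1 - τ q.2|)) with hS
  have hSne : S.Nonempty := ⟨1, Finset.mem_insert_self _ _⟩
  set δ : ℝ := S.min' hSne with hδ
  have hδpos : 0 < δ := by
    rw [hδ, Finset.lt_min'_iff]
    intro y hy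
    rw [hS, Finset.mem_insert] at hy
    rcases hy with rfl | hy
    · norm_num
    · obtain ⟨q, hq, rfl⟩ := Finset.mem_image.mp hy
      rw [Finset.mem_filter] at hq
      have : τ q.1 ≠ τ q.2 := fun h => hq.2 (hτ.injective h)
      exact abs_pos.mpr (sub_ne_zero.mpr this)
  have hδle : ∀ j k : Fin (N + 1), j ≠ k → δ ≤ |τ j - τ k| := by
    intro j k hjk
    apply Finset.min'_le
    rw [hS]
    exact Finset.mem_insert_of_mem (Finset.mem_image.mpr
      ⟨(j, k), Finset.mem_filter.mpr ⟨Finset.mem_univ _, hjk⟩, rfl⟩)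
  have hμpos : (0:ℝ) < (C + 1) / (ε * δ) := div_pos (by linarith) (mul_pos hεpos hδpos)
  refine ⟨(C + 1) / (ε * δ), hμpos, ?_⟩
  intro ξ hξ lam v hv hMv
  set c : ℝ := ‖ξ‖ with hc
  have hcpos : 0 < c := lt_of_lt_of_le hμpos hξ
  have hoff : ∀ j k : Fin (N + 1), j ≠ k → phiTilde p c (τ j - τ k) ≤ ε := by
    intro j k hjk
    have ht : 0 < |τ j - τ k| := lt_of_lt_of_le hδpos (hδle j k hjk)
    have hx : 0 < c * |τ j - τ k| := mul_pos hcpos ht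
    refine (phiTilde_le p hx hcpos.le).trans ?_
    rw [div_le_iff₀ hx]
    have h1 : C + 1 ≤ c * (ε * δ) := by
      rw [div_le_iff₀ (mul_pos hεpos hδpos)] at hξ
      linarith [hξ]
    have h2 : c * (ε * δ) ≤ ε * (c * |τ j - τ k|) := by
      have := mul_le_mul_of_nonneg_left (hδle j k hjk) (by positivity : (0:ℝ) ≤ ε * c)
      nlinarith
    nlinarith
  -- choose maximizing index
  obtain ⟨j, -, hj⟩ := Finset.exists_max_image Finset.univ (fun k => |v k|)
    ⟨0, Finset.mem_univ 0⟩
  have hvj : 0 < |v j| := by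
    obtain ⟨k, hk⟩ := Function.ne_iff.mp hv
    exact lt_of_lt_of_le (abs_pos.mpr hk) (hj k (Finset.mem_univ k))
  have heq : ∑ k, phiTilde p c (τ j - τ k) * v k = lam * v j := by
    have := congrFun hMv j
    simpa [Matrix.mulVec, dotProduct] using this
  have hdiag : phiTilde p c (τ j - τ j) = c0 := by
    rw [sub_self, phiTilde_zero p hp1, hc0eq]
  have hsplit : lam * v j - c0 * v j =
      ∑ k ∈ Finset.univ.erase j, phiTilde p c (τ j - τ k) * v k := by
    rw [← heq, ← Finset.add_sum_erase _ _ (Finset.mem_univ j), hdiag]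
    ring
  have hbound : |lam * v j - c0 * v j| ≤ (N * ε) * |v j| := by
    rw [hsplit]
    calc |∑ k ∈ Finset.univ.erase j, phiTilde p c (τ j - τ k) * v k|
        ≤ ∑ k ∈ Finset.univ.erase j, |phiTilde p c (τ j - τ k) * v k| :=
          Finset.abs_sum_le_sum_abs _ _
      _ ≤ ∑ _k ∈ Finset.univ.erase j, ε * |v j| := by
          apply Finset.sum_le_sum
          intro k hk
          rw [abs_mul, abs_of_nonneg (phiTilde_nonneg p hcpos.le _)]
          exact mul_le_mul (hoff j k (Finset.ne_of_mem_erase hk).symm)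
            (hj k (Finset.mem_univ k)) (abs_nonneg _) hεpos.le
      _ = (N * ε) * |v j| := by
          rw [Finset.sum_const, Finset.card_erase_of_mem (Finset.mem_univ j)]
          simp [Finset.card_univ, mul_assoc]
  have hNε : (N : ℝ) * ε ≤ c0 / 2 := by
    have h : (0:ℝ) < 2 * ((N:ℝ) + 1) := by positivity
    have h2 : (N:ℝ) * (c0 / (2 * ((N:ℝ) + 1))) = c0 * N / (2 * ((N:ℝ) + 1)) := by ring
    rw [hε, h2, div_le_div_iff₀ h (by norm_num)]
    nlinarith [hc0pos]
  have habs : |lam - c0| ≤ c0 / 2 := by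
    have h1 : |lam - c0| * |v j| ≤ (c0 / 2) * |v j| := by
      have : |lam - c0| * |v j| = |lam * v j - c0 * v j| := by
        rw [← abs_mul]; ring_nf
      rw [this]
      exact hbound.trans (mul_le_mul_of_nonneg_right hNε (abs_nonneg _))
    exact le_of_mul_le_mul_right h1 hvj
  have := abs_le.mp habs
  linarith [this.1]
end
end

section
/- There exists a constant A = A(p, τ) > 0 such that for all ξ ∈ ℝ^n with |ξ| ≥ 1/2 and all j, k ∈ {0, ..., N}, the coefficients a_{jk} of the radial-basis representation L_{ξ,j}(t) = Σ_{k=0}^{N} a_{jk} φ̃_ξ(t − t_k) of the Lagrange functions (i.e. the entries of the inverse matrix M_ξ^{−1}, where M_ξ = (φ̃_ξ(t_j − t_k))_{j,k}) satisfy |a_{jk}| ≤ A. -/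
open MeasureTheory Finset

noncomputable section

namespace RBFAux

def fker (p : ℕ) (u : ℝ) : ℝ := if 0 ≤ u then u ^ (p-1) * Real.exp (-u) else 0

lemma fker_nonneg (p : ℕ) (u : ℝ) : 0 ≤ fker p u := by
  unfold fker; split
  · positivity
  · exact le_refl 0

lemma fker_of_nonpos {p : ℕ} (hp : 2 ≤ p) {u : ℝ} (hu : u ≤ 0) : fker p u = 0 := by
  unfold fker; split
  · have : u = 0 := le_antisymm hu (by assumption)
    subst this
    rw [zero_pow (by omega), zero_mul]
  · rfl

lemma pow_le_factorial_mul_exp {x : ℝ} (hx : 0 ≤ x) (k : ℕ) :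
    x ^ k ≤ k.factorial * Real.exp x := by
  have h := Real.sum_le_exp_of_nonneg hx (k+1)
  have h2 : x ^ k / k.factorial ≤ ∑ i ∈ range (k+1), x ^ i / i.factorial := by
    refine Finset.single_le_sum (f := fun i => x ^ i / (i.factorial : ℝ)) ?_ (self_mem_range_succ k)
    intro i _; positivity
  have hk : (0:ℝ) < k.factorial := by exact_mod_cast k.factorial_pos
  calc x ^ k = (x ^ k / k.factorial) * k.factorial := by field_simp
    _ ≤ Real.exp x * k.factorial := mul_le_mul_of_nonneg_right (h2.trans h) hk.le
    _ = k.factorial * Real.exp x := mul_comm _ _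

lemma fker_le (p : ℕ) (u : ℝ) :
    fker p u ≤ (p-1).factorial * 2 ^ (p-1) * Real.exp (-(u/2)) := by
  unfold fker
  split
  · rename_i hu
    have h := pow_le_factorial_mul_exp (x := u/2) (by linarith) (p-1)
    have h2 : u ^ (p-1) ≤ (p-1).factorial * 2^(p-1) * Real.exp (u/2) := by
      have he : u ^ (p-1) = (u/2)^(p-1) * 2^(p-1) := by
        rw [div_pow]; field_simp
      rw [he]
      calc (u/2)^(p-1) * 2^(p-1) ≤ ((p-1).factorial * Real.exp (u/2)) * 2^(p-1) :=
            mul_le_mul_of_nonneg_right h (by positivity)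
        _ = (p-1).factorial * 2^(p-1) * Real.exp (u/2) := by ring
    calc u ^ (p-1) * Real.exp (-u)
        ≤ ((p-1).factorial * 2^(p-1) * Real.exp (u/2)) * Real.exp (-u) :=
          mul_le_mul_of_nonneg_right h2 (Real.exp_pos _).le
      _ = (p-1).factorial * 2^(p-1) * Real.exp (-(u/2)) := by
          rw [mul_assoc, ← Real.exp_add]; ring_nf
  · positivity

lemma fker_continuous {p : ℕ} (hp : 2 ≤ p) : Continuous (fker p) := by
  unfold fker
  refine Continuous.if ?_ (by fun_prop) continuous_const
  intro a ha
  have h : a = 0 := by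
    have he : frontier {x : ℝ | 0 ≤ x} = {0} := by
      rw [show {x : ℝ | 0 ≤ x} = Set.Ici 0 from rfl, frontier_Ici]
    rw [he] at ha; exact ha
  subst h
  rw [zero_pow (by omega), zero_mul]

lemma fker_pos {p : ℕ} (hp : 2 ≤ p) {u : ℝ} (hu : 0 < u) : 0 < fker p u := by
  unfold fker
  rw [if_pos hu.le]
  positivity

/-- Integrability of products of shifted kernels. -/
lemma integrable_fker_mul {p : ℕ} (hp : 2 ≤ p) (t s : ℝ) :
    Integrable (fun x => fker p (x - t) * fker p (x - s)) := by
  set D : ℝ := (p-1).factorial * 2 ^ (p-1) with hD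
  have hD0 : 0 ≤ D := by positivity
  set C : ℝ := D^2 * Real.exp ((t+s)/2) with hC
  have hC0 : 0 ≤ C := by positivity
  refine Integrable.mono' (g := fun x => Set.indicator (Set.Ici (max t s))
      (fun x => C * Real.exp (-x)) x) ?_ ?_ ?_
  · rw [integrable_indicator_iff measurableSet_Ici]
    have : IntegrableOn (fun x : ℝ => Real.exp (-1 * x)) (Set.Ici (max t s)) := by
      rw [integrableOn_Ici_iff_integrableOn_Ioi]
      exact exp_neg_integrableOn_Ioi _ one_pos
    have h2 : IntegrableOn (fun x : ℝ => C * Real.exp (-1 * x)) (Set.Ici (max t s)) :=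
      this.const_mul C
    refine h2.congr_fun (fun x _ => by dsimp only; rw [neg_one_mul]) measurableSet_Ici
  · exact (((fker_continuous hp).comp (by fun_prop)).mul
      ((fker_continuous hp).comp (by fun_prop))).aestronglyMeasurable
  · refine Filter.Eventually.of_forall fun x => ?_
    rw [Real.norm_eq_abs, abs_of_nonneg (mul_nonneg (fker_nonneg _ _) (fker_nonneg _ _))]
    by_cases hx : max t s ≤ x
    · rw [Set.indicator_of_mem (Set.mem_Ici.mpr hx)]
      calc fker p (x - t) * fker p (x - s)
          ≤ (D * Real.exp (-((x-t)/2))) * (D * Real.exp (-((x-s)/2))) := by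
            exact mul_le_mul (fker_le p _) (fker_le p _) (fker_nonneg _ _)
              (by positivity)
        _ = C * Real.exp (-x) := by
            have hee : Real.exp (-((x-t)/2)) * Real.exp (-((x-s)/2))
                = Real.exp ((t+s)/2) * Real.exp (-x) := by
              rw [← Real.exp_add, ← Real.exp_add]; congr 1; ring
            rw [hC, mul_mul_mul_comm, hee, sq]; ring
    · rw [Set.indicator_of_notMem (by simpa using hx)]
      rcases (not_le.mp hx) |> lt_max_iff.mp with h | h
      · rw [fker_of_nonpos hp (by linarith : x - t ≤ 0), zero_mul]
      · rw [fker_of_nonpos hp (by linarith : x - s ≤ 0), mul_zero]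

lemma integrableOn_pow_exp (k : ℕ) :
    IntegrableOn (fun x : ℝ => x ^ k * Real.exp (-(2*x))) (Set.Ioi 0) := by
  have h := integrableOn_rpow_mul_exp_neg_mul_rpow (s := (k:ℝ)) (p := 1) (b := 2)
    (lt_of_lt_of_le neg_one_lt_zero (Nat.cast_nonneg k)) one_pos two_pos
  refine h.congr_fun (fun x hx => ?_) measurableSet_Ioi
  dsimp only
  rw [Real.rpow_one, Real.rpow_natCast, neg_mul]

lemma integral_pow_exp (k : ℕ) :
    ∫ x in Set.Ioi 0, x ^ k * Real.exp (-(2*x)) = k.factorial / 2 ^ (k+1) := by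
  have h := Real.integral_rpow_mul_exp_neg_mul_Ioi (a := (k:ℝ)+1) (r := 2) (by positivity) two_pos
  have he : ∀ x : ℝ, x ^ ((k:ℝ)+1-1) * Real.exp (-(2*x)) = x ^ (k:ℕ) * Real.exp (-(2*x)) := by
    intro x
    rw [show ((k:ℝ)+1-1) = ((k:ℕ):ℝ) by push_cast; ring, Real.rpow_natCast]
  rw [MeasureTheory.setIntegral_congr_fun measurableSet_Ioi (fun x _ => he x)] at h
  rw [h]
  rw [Real.Gamma_nat_eq_factorial k,
    show ((k:ℝ)+1) = ((k+1:ℕ):ℝ) by push_cast; ring, Real.rpow_natCast]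
  rw [one_div, inv_pow, inv_mul_eq_div]

lemma term_eq {p m : ℕ} (hp : 2 ≤ p) (hm : m < p) (d E : ℝ) :
    ((p-1).choose m : ℝ) * d^(p-1-m) * E * (((p-1+m).factorial : ℝ) / 2^(p-1+m+1))
    = ((p-1).factorial : ℝ)/2^(2*p-1) * E * (cCoef p (p-1-m) * d^(p-1-m)) := by
  have hm1 : m ≤ p - 1 := by omega
  have e1 : 2*p-2-(p-1-m) = p-1+m := by omega
  have e2 : p-1-(p-1-m) = m := by omega
  have e3 : p-1+m+1 = p+m := by omega
  unfold cCoef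
  rw [e1, e2, e3]
  have hchoose : ((p-1).choose m : ℝ) * (m.factorial : ℝ) * ((p-1-m).factorial : ℝ)
      = ((p-1).factorial : ℝ) := by
    exact_mod_cast congrArg (Nat.cast (R := ℝ)) (Nat.choose_mul_factorial_mul_factorial hm1)
  rw [← hchoose]
  have h2pow : (2:ℝ)^(2*p-1) = 2^(p+m) * 2^(p-1-m) := by
    rw [← pow_add]; congr 1; omega
  rw [h2pow]
  have hfm : ((m.factorial : ℝ)) ≠ 0 := by exact_mod_cast m.factorial_pos.ne'
  have hfl : (((p-1-m).factorial : ℝ)) ≠ 0 := by exact_mod_cast (p-1-m).factorial_pos.ne'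
  field_simp

lemma integral_fker_core {p : ℕ} (hp : 2 ≤ p) {d : ℝ} (hd : 0 ≤ d) :
    ∫ x, fker p x * fker p (x + d)
      = (((p-1).factorial : ℝ) / 2 ^ (2*p-1)) * phiTilde p 1 d := by
  have hpp : p - 1 + 1 = p := by omega
  have h1 : (fun x => fker p x * fker p (x + d)) =
      Set.indicator (Set.Ioi 0) (fun x => Real.exp (-d) *
        (x^(p-1) * (x+d)^(p-1) * Real.exp (-(2*x)))) := by
    funext x
    by_cases hx : 0 < x
    · rw [Set.indicator_of_mem (Set.mem_Ioi.mpr hx)]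
      have hxd : 0 ≤ x + d := by linarith
      unfold fker
      rw [if_pos hx.le, if_pos hxd]
      have hee : Real.exp (-x) * Real.exp (-(x+d)) = Real.exp (-d) * Real.exp (-(2*x)) := by
        rw [← Real.exp_add, ← Real.exp_add]; congr 1; ring
      calc x ^ (p-1) * Real.exp (-x) * ((x+d)^(p-1) * Real.exp (-(x+d)))
          = (x^(p-1) * (x+d)^(p-1)) * (Real.exp (-x) * Real.exp (-(x+d))) := by ring
        _ = Real.exp (-d) * (x^(p-1) * (x+d)^(p-1) * Real.exp (-(2*x))) := by
            rw [hee]; ring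
    · rw [Set.indicator_of_notMem (by simpa using hx)]
      rw [fker_of_nonpos hp (not_lt.mp hx), zero_mul]
  rw [h1, integral_indicator measurableSet_Ioi]
  have h2 : ∀ x : ℝ, Real.exp (-d) * (x^(p-1)*(x+d)^(p-1)*Real.exp (-(2*x)))
      = ∑ m ∈ range p, ((p-1).choose m : ℝ) * d^(p-1-m) * Real.exp (-d) *
          (x^(p-1+m) * Real.exp (-(2*x))) := by
    intro x
    rw [add_pow, hpp, Finset.mul_sum, Finset.sum_mul, Finset.mul_sum]
    refine Finset.sum_congr rfl fun m hm => ?_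
    rw [pow_add]
    ring
  simp_rw [h2]
  rw [MeasureTheory.integral_finset_sum _ (fun m _ => ((integrableOn_pow_exp (p-1+m)).const_mul
    (((p-1).choose m : ℝ) * d^(p-1-m) * Real.exp (-d))))]
  simp_rw [integral_const_mul, integral_pow_exp]
  have hrhs : (((p-1).factorial : ℝ) / 2 ^ (2*p-1)) * phiTilde p 1 d
      = ∑ m ∈ range p, ((p-1).factorial : ℝ)/2^(2*p-1) * (Real.exp (-d) *
          (cCoef p (p-1-m) * d^(p-1-m))) := by
    unfold phiTilde
    rw [abs_of_nonneg hd, one_mul, Finset.mul_sum, Finset.mul_sum]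
    simp only [one_pow, mul_one]
    exact (Finset.sum_range_reflect (fun l => ((p-1).factorial : ℝ)/2^(2*p-1) * (Real.exp (-d) *
          (cCoef p l * d^l))) p).symm
  rw [hrhs]
  refine Finset.sum_congr rfl fun m hm => ?_
  rw [term_eq hp (Finset.mem_range.mp hm) d (Real.exp (-d)), mul_assoc]

lemma phiTilde_neg (p : ℕ) (c t : ℝ) : phiTilde p c (-t) = phiTilde p c t := by
  simp [phiTilde, abs_neg]

lemma integral_fker_shift {p : ℕ} (hp : 2 ≤ p) (t s : ℝ) :
    ∫ x, fker p (x - t) * fker p (x - s)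
      = (((p-1).factorial : ℝ) / 2 ^ (2*p-1)) * phiTilde p 1 (t - s) := by
  have key : ∀ u v : ℝ, v ≤ u → ∫ x, fker p (x - u) * fker p (x - v)
      = (((p-1).factorial : ℝ) / 2 ^ (2*p-1)) * phiTilde p 1 (u - v) := by
    intro u v huv
    have h := MeasureTheory.integral_add_right_eq_self
      (μ := volume) (fun x => fker p (x - u) * fker p (x - v)) u
    rw [← h]
    have : ∀ x : ℝ, fker p (x + u - u) * fker p (x + u - v)
        = fker p x * fker p (x + (u - v)) := by
      intro x; congr 1 <;> congr 1 <;> ring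
    simp_rw [this]
    exact integral_fker_core hp (by linarith)
  rcases le_total s t with h | h
  · exact key t s h
  · have h2 := key s t h
    have h3 : ∀ x : ℝ, fker p (x - s) * fker p (x - t) = fker p (x - t) * fker p (x - s) :=
      fun x => mul_comm _ _
    simp_rw [h3] at h2
    rw [h2, show s - t = -(t - s) by ring, phiTilde_neg]

/-- Strict positivity of the quadratic form for distinct nodes. -/
lemma quadform_pos {p : ℕ} (hp : 2 ≤ p) {m : ℕ} (s : Fin m → ℝ) (hs : Function.Injective s)
    (x : Fin m → ℝ) (hx : x ≠ 0) :
    0 < ∑ j, ∑ k, x j * x k * phiTilde p 1 (s j - s k) := by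
  classical
  set F : ℝ → ℝ := fun y => ∑ j, x j * fker p (y - s j) with hF
  have hFcont : Continuous F := by
    apply continuous_finset_sum
    intro j _
    exact continuous_const.mul ((fker_continuous hp).comp (by fun_prop))
  have hint : ∀ j k : Fin m, Integrable (fun y => (x j * fker p (y - s j)) *
      (x k * fker p (y - s k))) := by
    intro j k
    have := (integrable_fker_mul hp (s j) (s k)).const_mul (x j * x k)
    refine this.congr ?_
    refine Filter.Eventually.of_forall fun y => ?_
    ring
  have hFsq : ∀ y : ℝ, F y ^ 2 = ∑ j, ∑ k, (x j * fker p (y - s j)) * (x k * fker p (y - s k)) := by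
    intro y
    rw [sq, hF, Finset.sum_mul_sum]
  have hFsqint : Integrable (fun y => F y ^ 2) := by
    simp_rw [hFsq]
    exact integrable_finset_sum _ (fun j _ => integrable_finset_sum _ (fun k _ => hint j k))
  have hIF : ∫ y, F y ^ 2 = ∑ j, ∑ k, x j * x k *
      ((((p-1).factorial : ℝ) / 2 ^ (2*p-1)) * phiTilde p 1 (s j - s k)) := by
    simp_rw [hFsq]
    rw [MeasureTheory.integral_finset_sum _ (fun j _ =>
      integrable_finset_sum _ (fun k _ => hint j k))]
    refine Finset.sum_congr rfl fun j _ => ?_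
    rw [MeasureTheory.integral_finset_sum _ (fun k _ => hint j k)]
    refine Finset.sum_congr rfl fun k _ => ?_
    have : ∀ y : ℝ, (x j * fker p (y - s j)) * (x k * fker p (y - s k))
        = (x j * x k) * (fker p (y - s j) * fker p (y - s k)) := fun y => by ring
    simp_rw [this]
    rw [MeasureTheory.integral_const_mul, integral_fker_shift hp (s j) (s k)]
  have hconst : (0:ℝ) < ((p-1).factorial : ℝ) / 2 ^ (2*p-1) := by positivity
  have hIF2 : ∫ y, F y ^ 2 = (((p-1).factorial : ℝ) / 2 ^ (2*p-1)) *
      ∑ j, ∑ k, x j * x k * phiTilde p 1 (s j - s k) := by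
    rw [hIF, Finset.mul_sum]
    refine Finset.sum_congr rfl fun j _ => ?_
    rw [Finset.mul_sum]
    refine Finset.sum_congr rfl fun k _ => ?_
    ring
  have hnn : 0 ≤ ∫ y, F y ^ 2 := integral_nonneg fun y => sq_nonneg _
  rcases hnn.lt_or_eq with h | h
  · nlinarith [hIF2, hconst, h]
  · exfalso
    have hzero : (fun y => F y ^ 2) =ᵐ[volume] 0 :=
      (MeasureTheory.integral_eq_zero_iff_of_nonneg (fun y => sq_nonneg (F y)) hFsqint).mp h.symm
    have hFzero : ∀ y, F y = 0 := by
      have heq : (fun y => F y ^ 2) = 0 :=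
        ((hFcont.pow 2).ae_eq_iff_eq volume continuous_const).mp hzero
      intro y
      have := congrFun heq y
      simpa using pow_eq_zero_iff (n := 2) (by norm_num) |>.mp this
    have hxj : ∀ j, x j = 0 := by
      by_contra hc
      push_neg at hc
      obtain ⟨j1, hj1⟩ := hc
      set T : Finset (Fin m) := Finset.univ.filter (fun j => x j ≠ 0) with hTdef
      have hTne : T.Nonempty := ⟨j1, by simp [hTdef, hj1]⟩
      obtain ⟨j₀, hj₀T, hj₀min⟩ := T.exists_min_image s hTne
      set T' := T.erase j₀ with hT'def
      have key : ∃ y : ℝ, s j₀ < y ∧ ∀ k ∈ T', y < s k := by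
        rcases T'.eq_empty_or_nonempty with he | hne
        · exact ⟨s j₀ + 1, by linarith, fun k hk => absurd (he ▸ hk) (Finset.notMem_empty k)⟩
        · obtain ⟨k₀, hk₀, hk₀min⟩ := T'.exists_min_image s hne
          have h1 : s j₀ ≤ s k₀ := hj₀min k₀ (Finset.mem_of_mem_erase hk₀)
          have h2 : s j₀ ≠ s k₀ := fun he => (Finset.ne_of_mem_erase hk₀) (hs he).symm
          have h3 : s j₀ < s k₀ := lt_of_le_of_ne h1 h2
          refine ⟨(s j₀ + s k₀)/2, by linarith, fun k hk => ?_⟩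
          have := hk₀min k hk
          linarith
      obtain ⟨y, hy1, hy2⟩ := key
      have hFy : ∑ j, x j * fker p (y - s j) = 0 := hFzero y
      have hsum : ∑ j, x j * fker p (y - s j) = x j₀ * fker p (y - s j₀) := by
        rw [Finset.sum_eq_single j₀]
        · intro b _ hb
          by_cases hxb : x b = 0
          · rw [hxb, zero_mul]
          · have hbT' : b ∈ T' := Finset.mem_erase.mpr ⟨hb, by simp [hTdef, hxb]⟩
            rw [fker_of_nonpos hp (by linarith [hy2 b hbT'] : y - s b ≤ 0), mul_zero]
        · intro h; exact absurd (Finset.mem_univ j₀) h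
      have hj₀ : x j₀ ≠ 0 := by
        have := hj₀T
        simp only [hTdef, Finset.mem_filter] at this
        exact this.2
      have hker : 0 < fker p (y - s j₀) := fker_pos hp (by linarith)
      have hprod : x j₀ * fker p (y - s j₀) = 0 := by rw [← hsum]; exact hFy
      exact hj₀ ((mul_eq_zero.mp hprod).resolve_right hker.ne')
    exact hx (funext hxj)

lemma cCoef_pos (p l : ℕ) : 0 < cCoef p l := by
  unfold cCoef
  have h1 : (0:ℝ) < ((2*p-2-l).factorial : ℝ) := by exact_mod_cast Nat.factorial_pos _
  have h2 : (0:ℝ) < (l.factorial : ℝ) := by exact_mod_cast Nat.factorial_pos _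
  have h3 : (0:ℝ) < ((p-1-l).factorial : ℝ) := by exact_mod_cast Nat.factorial_pos _
  positivity
lemma phiTilde_scale (p : ℕ) {c : ℝ} (hc : 0 ≤ c) (t : ℝ) :
    phiTilde p c t = phiTilde p 1 (c * t) := by
  unfold phiTilde
  rw [abs_mul, abs_of_nonneg hc, one_mul]
  congr 1
  refine Finset.sum_congr rfl fun l _ => ?_
  rw [mul_pow, one_pow]
  ring
lemma phiTilde_as_sum (p : ℕ) (c t : ℝ) :
    phiTilde p c t = ∑ l ∈ Finset.range p,
      cCoef p l * ((c * |t|) ^ l * Real.exp (-(c * |t|))) := by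
  unfold phiTilde
  rw [Finset.mul_sum]
  refine Finset.sum_congr rfl fun l _ => ?_
  rw [mul_pow]; ring

lemma phiTilde_zero (p : ℕ) (hp : 0 < p) (c : ℝ) : phiTilde p c 0 = cCoef p 0 := by
  unfold phiTilde
  rw [abs_zero, mul_zero, neg_zero, Real.exp_zero, one_mul]
  rw [Finset.sum_eq_single 0]
  · simp
  · intro l _ hl; simp [zero_pow hl]
  · intro h; exact absurd (Finset.mem_range.mpr hp) h
lemma continuous_phiTilde_c (p : ℕ) (t : ℝ) : Continuous fun c => phiTilde p c t := by
  unfold phiTilde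
  fun_prop
lemma tendsto_phiTilde_atTop (p : ℕ) {t : ℝ} (ht : t ≠ 0) :
    Filter.Tendsto (fun c => phiTilde p c t) Filter.atTop (nhds 0) := by
  have habs : 0 < |t| := abs_pos.mpr ht
  simp_rw [phiTilde_as_sum]
  have h0 : (0:ℝ) = ∑ l ∈ Finset.range p, cCoef p l * 0 := by simp
  rw [h0]
  refine tendsto_finset_sum _ fun l _ => Filter.Tendsto.const_mul _ ?_
  have h1 : Filter.Tendsto (fun c : ℝ => c * |t|) Filter.atTop Filter.atTop :=
    Filter.Tendsto.atTop_mul_const habs Filter.tendsto_id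
  exact (Real.tendsto_pow_mul_exp_neg_atTop_nhds_zero l).comp h1

def Mmat (p N : ℕ) (τ : Fin (N+1) → ℝ) (c : ℝ) : Matrix (Fin (N+1)) (Fin (N+1)) ℝ :=
  Matrix.of fun j k => phiTilde p c (τ j - τ k)

lemma Mmat_posDef {p N : ℕ} (hp : 2 ≤ p) {τ : Fin (N+1) → ℝ} (hτ : StrictMono τ)
    {c : ℝ} (hc : 0 < c) : (Mmat p N τ c).PosDef := by
  refine Matrix.PosDef.of_dotProduct_mulVec_pos ?_ ?_
  · ext j k
    simp only [Matrix.conjTranspose_apply, Mmat, Matrix.of_apply, star_trivial]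
    rw [show τ k - τ j = -(τ j - τ k) by ring, phiTilde_neg]
  · intro x hx
    have hs : Function.Injective (fun j => c * τ j) := fun a b hab =>
      hτ.injective (mul_left_cancel₀ hc.ne' hab)
    have hq := quadform_pos hp (fun j => c * τ j) hs x hx
    have expand : dotProduct (star x) ((Mmat p N τ c).mulVec x)
        = ∑ j, ∑ k, x j * x k * phiTilde p 1 ((fun j => c * τ j) j - (fun j => c * τ j) k) := by
      simp only [star_trivial, dotProduct, Matrix.mulVec, Mmat, Matrix.of_apply,
        Finset.mul_sum, Pi.star_apply]
      refine Finset.sum_congr rfl fun j _ => Finset.sum_congr rfl fun k _ => ?_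
      rw [phiTilde_scale p hc.le]
      simp only [mul_sub]
      ring
    rw [expand]
    exact hq

lemma continuous_Mmat (p N : ℕ) (τ : Fin (N+1) → ℝ) : Continuous (Mmat p N τ) :=
  continuous_matrix fun j k => continuous_phiTilde_c p _

def Dlim (p N : ℕ) : Matrix (Fin (N+1)) (Fin (N+1)) ℝ := cCoef p 0 • (1 : Matrix _ _ ℝ)

lemma tendsto_Mmat {p N : ℕ} (hp : 2 ≤ p) {τ : Fin (N+1) → ℝ} (hτ : StrictMono τ) :
    Filter.Tendsto (Mmat p N τ) Filter.atTop (nhds (Dlim p N)) := by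
  refine tendsto_pi_nhds.mpr fun j => tendsto_pi_nhds.mpr fun k => ?_
  by_cases hjk : j = k
  · subst hjk
    have h1 : ∀ c : ℝ, Mmat p N τ c j j = cCoef p 0 := fun c => by
      simp [Mmat, sub_self, phiTilde_zero p (by omega : 0 < p)]
    simp_rw [h1]
    have h2 : Dlim p N j j = cCoef p 0 := by simp [Dlim]
    rw [h2]; exact tendsto_const_nhds
  · have hne : τ j - τ k ≠ 0 := sub_ne_zero.mpr (fun he => hjk (hτ.injective he))
    have h2 : Dlim p N j k = 0 := by simp [Dlim, Matrix.one_apply_ne hjk]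
    rw [h2]
    exact tendsto_phiTilde_atTop p hne

lemma bounded_of_tendsto {f : ℝ → ℝ} (a : ℝ) (hf : Continuous f) {L : ℝ}
    (hlim : Filter.Tendsto f Filter.atTop (nhds L)) : ∃ B, ∀ c ∈ Set.Ici a, |f c| ≤ B := by
  have h1 : ∀ᶠ c in Filter.atTop, |f c| ≤ |L| + 1 :=
    (hlim.abs).eventually_le_const (lt_add_one |L|)
  obtain ⟨C₀, hC₀⟩ := Filter.eventually_atTop.mp h1
  set C := max C₀ a with hC
  obtain ⟨B₀, hB₀⟩ := (isCompact_Icc (a := a) (b := C)).exists_bound_of_continuousOn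
    hf.continuousOn
  refine ⟨max B₀ (|L| + 1), fun c hc => ?_⟩
  rcases le_total c C with h | h
  · exact le_trans (by simpa using hB₀ c ⟨hc, h⟩) (le_max_left _ _)
  · exact le_trans (hC₀ c (le_trans (le_max_left _ _) h)) (le_max_right _ _)

lemma lower_of_tendsto {f : ℝ → ℝ} {a : ℝ} (hf : Continuous f)
    (hpos : ∀ c, a ≤ c → 0 < f c) {L : ℝ} (hL : 0 < L)
    (hlim : Filter.Tendsto f Filter.atTop (nhds L)) :
    ∃ δ > (0:ℝ), ∀ c, a ≤ c → δ ≤ f c := by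
  have h1 : ∀ᶠ c in Filter.atTop, L/2 ≤ f c :=
    hlim.eventually_const_le (half_lt_self hL)
  obtain ⟨C₀, hC₀⟩ := Filter.eventually_atTop.mp h1
  set C := max C₀ a with hCdef
  have hne : (Set.Icc a C).Nonempty := ⟨a, le_refl a, le_max_right _ _⟩
  obtain ⟨x₀, hx₀mem, hx₀min⟩ := (isCompact_Icc (a := a) (b := C)).exists_isMinOn hne
    hf.continuousOn
  have hx₀pos : 0 < f x₀ := hpos x₀ hx₀mem.1
  refine ⟨min (f x₀) (L/2), lt_min hx₀pos (by linarith), fun c hc => ?_⟩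
  rcases le_total c C with h | h
  · exact le_trans (min_le_left _ _) (hx₀min ⟨hc, h⟩)
  · exact le_trans (min_le_right _ _) (hC₀ c (le_trans (le_max_left _ _) h))

end RBFAux

/-- **Lemma (Uniform bound on the RBF coefficients).** There is a constant
`A = A(p, τ) > 0` such that for all `ξ ∈ ℝⁿ` with `|ξ| ≥ 1/2` and all
`j, k ∈ {0, ..., N}`, the coefficients `a_{jk}` of the radial-basis representation of the
Lagrange functions, i.e. the entries of the inverse of the matrix
`M_ξ = (φ̃_ξ(τ j - τ k))_{j,k}`, satisfy `|a_{jk}| ≤ A`. -/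


theorem rbf_coefficients_uniformly_bounded
    (n p N : ℕ) (hp : 2 ≤ p) (hN : p ≤ N + 1)
    (τ : Fin (N + 1) → ℝ) (hτ : StrictMono τ) :
    ∃ A > (0 : ℝ), ∀ ξ : EuclideanSpace ℝ (Fin n), (1 / 2 : ℝ) ≤ ‖ξ‖ →
      ∀ j k : Fin (N + 1),
        |(Matrix.of fun j k => phiTilde p ‖ξ‖ (τ j - τ k))⁻¹ j k| ≤ A := by
  classical
  set M := RBFAux.Mmat p N τ with hMdef
  have hdetpos : ∀ c, (1/2:ℝ) ≤ c → 0 < (M c).det := fun c hc =>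
    (RBFAux.Mmat_posDef hp hτ (by linarith : (0:ℝ) < c)).det_pos
  have hMlim := RBFAux.tendsto_Mmat (τ := τ) hp hτ
  have hdetcont : Continuous fun c => (M c).det :=
    Continuous.matrix_det (RBFAux.continuous_Mmat p N τ)
  have hdetlim : Filter.Tendsto (fun c => (M c).det) Filter.atTop
      (nhds ((RBFAux.Dlim p N).det)) :=
    ((continuous_id.matrix_det).tendsto (RBFAux.Dlim p N)).comp hMlim
  have hc0 : 0 < cCoef p 0 := RBFAux.cCoef_pos p 0
  have hdetD : (0:ℝ) < (RBFAux.Dlim p N).det := by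
    have : (RBFAux.Dlim p N).det = (cCoef p 0)^(N+1) := by
      simp [RBFAux.Dlim, Matrix.det_smul, Fintype.card_fin]
    rw [this]; positivity
  obtain ⟨δ, hδ, hdetlow⟩ := RBFAux.lower_of_tendsto hdetcont hdetpos hdetD hdetlim
  have hadj : ∀ jk : Fin (N+1) × Fin (N+1), ∃ B, ∀ c ∈ Set.Ici (1/2:ℝ),
      |(M c).adjugate jk.1 jk.2| ≤ B := by
    intro jk
    refine RBFAux.bounded_of_tendsto (1/2)
      (Continuous.matrix_elem (Continuous.matrix_adjugate (RBFAux.continuous_Mmat p N τ)) _ _)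
      (L := (RBFAux.Dlim p N).adjugate jk.1 jk.2) ?_
    exact (((continuous_id.matrix_adjugate).matrix_elem jk.1 jk.2).tendsto
      (RBFAux.Dlim p N)).comp hMlim
  choose B hB using hadj
  have hBnn : ∀ jk, 0 ≤ B jk := fun jk =>
    le_trans (abs_nonneg _) (hB jk (1/2) (by norm_num [Set.mem_Ici]))
  set Bmax : ℝ := Finset.univ.sup' (Finset.univ_nonempty) B with hBmax
  refine ⟨max (Bmax / δ) 1, lt_of_lt_of_le one_pos (le_max_right _ _), ?_⟩
  intro ξ hξ j k
  set c := ‖ξ‖ with hcdef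
  have hc : (1/2:ℝ) ≤ c := hξ
  have hdetne : (M c).det ≠ 0 := (hdetpos c hc).ne'
  have hinv : (Matrix.of fun j k => phiTilde p ‖ξ‖ (τ j - τ k))⁻¹ = (M c)⁻¹ := rfl
  rw [hinv, Matrix.inv_def]
  have hentry : (Ring.inverse (M c).det • (M c).adjugate) j k
      = ((M c).det)⁻¹ * (M c).adjugate j k := by
    rw [Matrix.smul_apply, Ring.inverse_eq_inv, smul_eq_mul]
  rw [hentry, abs_mul, abs_inv, abs_of_pos (hdetpos c hc)]
  have h1 : ((M c).det)⁻¹ ≤ δ⁻¹ := by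
    apply inv_anti₀ hδ (hdetlow c hc)
  have h2 : |(M c).adjugate j k| ≤ Bmax :=
    le_trans (hB (j, k) c hc) (Finset.le_sup' B (Finset.mem_univ (j, k)))
  calc ((M c).det)⁻¹ * |(M c).adjugate j k| ≤ δ⁻¹ * Bmax := by
        exact mul_le_mul h1 h2 (abs_nonneg _) (by positivity)
    _ = Bmax / δ := by rw [div_eq_inv_mul]
    _ ≤ max (Bmax / δ) 1 := le_max_left _ _
end
end
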